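/- arXiv:2012.08064 — 6 statements merged into one kernel-verified Lean document; each statement's English description precedes it below -/
import Mathlib

section
/- Under the standing setup, for every ℓ ∈ ℕ there exist constants C > 0 and γ > 0 such that h_k(εr)/h_ℓ(εr) ≤ C · ε^{max(k/2 − γ, 0)} · h_k(r)/h_ℓ(r) for all r > 0, all ε ∈ (0,1), and all integers k ≥ ℓ+1. -/
open Set Filter

/-- Core Sturm-type comparison lemma: if `f, g > 0` solve
`f'' + n/r f' = P f`, `g'' + n/r g' = Q g` on `(0,∞)` with `Q ≤ P`, and `f/g → 0`
at `0⁺`, then `f/g` is monotone nondecreasing on `(0,∞)`. -/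
lemma core_mono (n : ℝ) (f f' g g' P Q : ℝ → ℝ)
    (hf : ∀ r ∈ Set.Ioi (0:ℝ), HasDerivAt f (f' r) r)
    (hf' : ∀ r ∈ Set.Ioi (0:ℝ), HasDerivAt f' (P r * f r - n / r * f' r) r)
    (hg : ∀ r ∈ Set.Ioi (0:ℝ), HasDerivAt g (g' r) r)
    (hg' : ∀ r ∈ Set.Ioi (0:ℝ), HasDerivAt g' (Q r * g r - n / r * g' r) r)
    (hfpos : ∀ r ∈ Set.Ioi (0:ℝ), 0 < f r)
    (hgpos : ∀ r ∈ Set.Ioi (0:ℝ), 0 < g r)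
    (hPQ : ∀ r ∈ Set.Ioi (0:ℝ), Q r ≤ P r)
    (hlim : Filter.Tendsto (fun r => f r / g r) (nhdsWithin 0 (Set.Ioi 0)) (nhds 0)) :
    MonotoneOn (fun r => f r / g r) (Set.Ioi 0) := by
  set W : ℝ → ℝ := fun r => r ^ n * (f' r * g r - f r * g' r) with hWdef
  have hW : ∀ r ∈ Set.Ioi (0:ℝ), HasDerivAt W (r ^ n * ((P r - Q r) * (f r * g r))) r := by
    intro r hr
    have hr0 : (0:ℝ) < r := hr
    have h1 : HasDerivAt (fun x : ℝ => x ^ n) (n * r ^ (n - 1)) r :=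
      Real.hasDerivAt_rpow_const (Or.inl hr0.ne')
    have h2 : HasDerivAt (fun x => f' x * g x - f x * g' x)
        (((P r * f r - n / r * f' r) * g r + f' r * g' r) -
          (f' r * g' r + f r * (Q r * g r - n / r * g' r))) r :=
      (((hf' r hr).mul (hg r hr)).sub ((hf r hr).mul (hg' r hr)))
    have h3 := h1.mul h2
    refine h3.congr_deriv ?_
    have hrn : r ^ (n - 1) = r ^ n / r := by
      rw [Real.rpow_sub hr0, Real.rpow_one]
    rw [hrn]
    field_simp
    ring
  have hWderiv : ∀ r ∈ Set.Ioi (0:ℝ), deriv W r = r ^ n * ((P r - Q r) * (f r * g r)) :=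
    fun r hr => (hW r hr).deriv
  have hWmono : MonotoneOn W (Set.Ioi 0) := by
    apply monotoneOn_of_deriv_nonneg (convex_Ioi 0)
      (fun r hr => ((hW r hr).continuousAt).continuousWithinAt)
    · intro x hx
      rw [interior_Ioi] at hx
      exact ((hW x hx).differentiableAt).differentiableWithinAt
    · intro x hx
      rw [interior_Ioi] at hx
      rw [hWderiv x hx]
      have h1 := hfpos x hx; have h2 := hgpos x hx; have h3 := hPQ x hx
      have hx0 : (0:ℝ) < x := hx
      have : (0:ℝ) ≤ P x - Q x := by linarith
      positivity
  have hq : ∀ r ∈ Set.Ioi (0:ℝ), HasDerivAt (fun r => f r / g r)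
      ((f' r * g r - f r * g' r) / (g r) ^ 2) r := by
    intro r hr
    exact (hf r hr).div (hg r hr) (hgpos r hr).ne'
  have hW0 : ∀ r ∈ Set.Ioi (0:ℝ), 0 ≤ W r := by
    by_contra hcon
    push_neg at hcon
    obtain ⟨r1, hr1, hWr1⟩ := hcon
    have hr10 : (0:ℝ) < r1 := hr1
    have hanti : StrictAntiOn (fun r => f r / g r) (Set.Ioc 0 r1) := by
      apply strictAntiOn_of_deriv_neg (convex_Ioc 0 r1)
      · intro r hr
        exact ((hq r hr.1).continuousAt).continuousWithinAt
      · intro x hx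
        rw [interior_Ioc] at hx
        have hx0 : (0:ℝ) < x := hx.1
        rw [(hq x hx.1).deriv]
        have hWx : W x ≤ W r1 := hWmono hx0 hr1 hx.2.le
        have hWxneg : W x < 0 := lt_of_le_of_lt hWx hWr1
        have hxn : (0:ℝ) < x ^ n := Real.rpow_pos_of_pos hx0 n
        have hnum : f' x * g x - f x * g' x < 0 := by
          by_contra hnn
          push_neg at hnn
          have : 0 ≤ W x := mul_nonneg hxn.le hnn
          linarith
        exact div_neg_of_neg_of_pos hnum (pow_pos (hgpos x hx.1) 2)
    have hqr1 : 0 < f r1 / g r1 := div_pos (hfpos r1 hr1) (hgpos r1 hr1)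
    have h1 : ∀ᶠ r in nhdsWithin 0 (Set.Ioi 0), f r / g r < f r1 / g r1 :=
      hlim.eventually_lt_const hqr1
    have h2 : ∀ᶠ r in nhdsWithin 0 (Set.Ioi 0), r < r1 :=
      eventually_nhdsWithin_of_eventually_nhds (eventually_lt_nhds hr10)
    have h3 : ∀ᶠ r in nhdsWithin 0 (Set.Ioi 0), r ∈ Set.Ioi (0:ℝ) :=
      eventually_mem_nhdsWithin
    obtain ⟨s, hs1, hs2, hs3⟩ := (h1.and (h2.and h3)).exists
    have : f r1 / g r1 < f s / g s :=
      hanti ⟨hs3, hs2.le⟩ ⟨hr10, le_refl r1⟩ hs2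
    linarith
  apply monotoneOn_of_deriv_nonneg (convex_Ioi 0)
    (fun r hr => ((hq r hr).continuousAt).continuousWithinAt)
  · intro x hx
    rw [interior_Ioi] at hx
    exact ((hq x hx).differentiableAt).differentiableWithinAt
  · intro x hx
    rw [interior_Ioi] at hx
    rw [(hq x hx).deriv]
    have hWx := hW0 x hx
    have hxn : (0:ℝ) < (x:ℝ) ^ n := Real.rpow_pos_of_pos hx n
    have hnum : 0 ≤ f' x * g x - f x * g' x := by
      by_contra hnn
      push_neg at hnn
      have : W x < 0 := mul_neg_of_pos_of_neg hxn hnn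
      linarith
    exact div_nonneg hnum (pow_pos (hgpos x hx) 2).le

/-- Derivative of the derivative of a power barrier, written in Schrödinger form. -/
lemma barrier_deriv (cc n : ℝ) (r : ℝ) (hr : (0:ℝ) < r) :
    HasDerivAt (fun t : ℝ => cc * t ^ (cc - 1))
      ((cc * (cc + n - 1) * r ^ (-2 : ℝ)) * r ^ cc - n / r * (cc * r ^ (cc - 1))) r := by
  have h1 : HasDerivAt (fun t : ℝ => cc * t ^ (cc - 1)) (cc * ((cc - 1) * r ^ (cc - 1 - 1))) r :=
    (Real.hasDerivAt_rpow_const (Or.inl hr.ne')).const_mul cc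
  convert h1 using 1
  have e1 : r ^ (cc - 1 - 1) = r ^ (-2 : ℝ) * r ^ cc := by
    rw [show cc - 1 - 1 = -2 + cc by ring, Real.rpow_add hr]
  have e2 : r ^ (cc - 1) = r ^ (-2 : ℝ) * r ^ cc * r := by
    rw [show cc - 1 = (-2 + cc) + 1 by ring, Real.rpow_add hr, Real.rpow_add hr, Real.rpow_one]
  rw [e1, e2]
  field_simp
  ring

lemma rpow_tendsto_zero {cc : ℝ} (hc : 0 < cc) :
    Filter.Tendsto (fun r : ℝ => r ^ cc) (nhdsWithin 0 (Set.Ioi 0)) (nhds 0) := by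
  have h1 : ContinuousAt (fun r : ℝ => r ^ cc) 0 :=
    Real.continuousAt_rpow_const 0 cc (Or.inr hc.le)
  have h2 := h1.tendsto
  rw [Real.zero_rpow hc.ne'] at h2
  exact h2.mono_left nhdsWithin_le_nhds

/-- `A^+_λ` from the paper. -/
noncomputable def Aplus (N : ℕ) (l : ℝ) : ℝ :=
  (-((N : ℝ) - 2) + Real.sqrt (((N : ℝ) - 2) ^ 2 + 4 * l)) / 2

/-- `A^-_λ` from the paper. -/
noncomputable def Aminus (N : ℕ) (l : ℝ) : ℝ :=
  (-((N : ℝ) - 2) - Real.sqrt (((N : ℝ) - 2) ^ 2 + 4 * l)) / 2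

/-- The eigenvalue `ω_k = k (N + k - 2)` of the Laplace–Beltrami operator on the sphere. -/
noncomputable def omegaEV (N k : ℕ) : ℝ := (k : ℝ) * ((N : ℝ) + (k : ℝ) - 2)

lemma le_Aplus (N : ℕ) (l x : ℝ) (hx : 0 ≤ 2*x + ((N:ℝ)-2))
    (hineq : x*(x+((N:ℝ)-2)) ≤ l) : x ≤ Aplus N l := by
  unfold Aplus
  have harg : 0 ≤ ((N:ℝ)-2)^2 + 4*l := by nlinarith
  have h1 : 2*x + ((N:ℝ)-2) ≤ Real.sqrt (((N:ℝ)-2)^2 + 4*l) := by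
    rw [Real.le_sqrt hx harg]
    nlinarith
  linarith

lemma Aplus_nonneg (N : ℕ) {l : ℝ} (hl : 0 ≤ l) (hN : 2 ≤ N) : 0 ≤ Aplus N l := by
  apply le_Aplus N l 0
  · have : (2:ℝ) ≤ (N:ℝ) := by exact_mod_cast hN
    linarith
  · simpa using hl

lemma Aplus_identity (N : ℕ) (l : ℝ) (hl : 0 ≤ ((N:ℝ)-2)^2 + 4*l) :
    Aplus N l * (Aplus N l + ((N:ℝ)-2)) = l := by
  unfold Aplus
  have h := Real.sq_sqrt hl
  have expand : (-((N:ℝ)-2) + Real.sqrt (((N:ℝ)-2)^2 + 4*l)) / 2 *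
      ((-((N:ℝ)-2) + Real.sqrt (((N:ℝ)-2)^2 + 4*l)) / 2 + ((N:ℝ)-2))
      = (Real.sqrt (((N:ℝ)-2)^2 + 4*l) ^ 2 - ((N:ℝ)-2)^2) / 4 := by ring
  rw [expand, h]
  ring

lemma Aplus_strictMono (N : ℕ) {l1 l2 : ℝ} (h1 : 0 ≤ ((N:ℝ)-2)^2+4*l1) (hlt : l1 < l2) :
    Aplus N l1 < Aplus N l2 := by
  unfold Aplus
  have := Real.sqrt_lt_sqrt h1 (show ((N:ℝ)-2)^2+4*l1 < ((N:ℝ)-2)^2+4*l2 by linarith)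
  linarith

set_option maxHeartbeats 2000000 in
/-- under the standing setup, for every `ℓ` there are `C > 0`, `γ > 0` with
`h_k(εr)/h_ℓ(εr) ≤ C ε^{max(k/2-γ,0)} h_k(r)/h_ℓ(r)` for all `r > 0`, `ε ∈ (0,1)`, `k ≥ ℓ+1`. -/
theorem stmt_5
    (N : ℕ) (hN : 2 ≤ N) (m : ℕ) (hm : 1 ≤ m)
    (V : ℝ → ℝ) (lam1 lam2 ρ1 ρ2 K : ℝ)
    (hlam1 : -((N : ℝ) - 2) ^ 2 / 4 ≤ lam1) (hlam2 : -((N : ℝ) - 2) ^ 2 / 4 ≤ lam2)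
    (hρ1 : 0 < ρ1) (hρ2 : 0 < ρ2) (hK : 0 < K)
    (hVsmooth : ContDiffOn ℝ m V (Set.Ioi 0))
    (hV0 : ∀ r : ℝ, 0 < r → r ≤ 1 → |V r - lam1 * r ^ (-2 : ℝ)| ≤ K * r ^ (-2 + ρ1))
    (hVinf : ∀ r : ℝ, 1 ≤ r → |V r - lam2 * r ^ (-2 : ℝ)| ≤ K * r ^ (-2 - ρ2))
    (hVderiv : ∀ ℓ : ℕ, 1 ≤ ℓ → ℓ ≤ m → ∃ M : ℝ, ∀ r : ℝ, 0 < r →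
      |r ^ (ℓ + 2) * iteratedDeriv ℓ V r| ≤ M)
    (A2 : ℕ → ℝ) (Bc : ℕ → ℕ)
    (hA2 : ∀ k : ℕ, 1 ≤ k → A2 k = Aplus N (lam2 + omegaEV N k) ∧ Bc k = 0)
    (hA20 : (A2 0 = Aplus N lam2 ∧
              ((lam2 = -((N : ℝ) - 2) ^ 2 / 4 ∧ Bc 0 = 1) ∨
               (-((N : ℝ) - 2) ^ 2 / 4 < lam2 ∧ Bc 0 = 0))) ∨
            (A2 0 = Aminus N lam2 ∧ Bc 0 = 0 ∧ -(N : ℝ) / 2 < A2 0))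
    (h : ℕ → ℝ → ℝ) (c : ℕ → ℝ)
    (hpos : ∀ k : ℕ, ∀ r : ℝ, 0 < r → 0 < h k r)
    (hsmooth : ∀ k : ℕ, ContDiffOn ℝ (m + 2) (h k) (Set.Ioi 0))
    (hODE : ∀ k : ℕ, ∀ r : ℝ, 0 < r →
      deriv (deriv (h k)) r + ((N : ℝ) - 1) / r * deriv (h k) r
        - (V r + omegaEV N k * r ^ (-2 : ℝ)) * h k r = 0)
    (hzero : ∀ k : ℕ, Filter.Tendsto
      (fun r : ℝ => r ^ (-(Aplus N (lam1 + omegaEV N k))) * h k r)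
      (nhdsWithin 0 (Set.Ioi 0)) (nhds 1))
    (hc : ∀ k : ℕ, 0 < c k)
    (hinfty : ∀ k : ℕ, Filter.Tendsto
      (fun r : ℝ => h k r / (r ^ A2 k * Real.log r ^ Bc k)) Filter.atTop (nhds (c k)))
    (ℓ : ℕ) :
    ∃ C : ℝ, 0 < C ∧ ∃ γ : ℝ, 0 < γ ∧
      ∀ r : ℝ, 0 < r → ∀ ε : ℝ, 0 < ε → ε < 1 → ∀ k : ℕ, ℓ + 1 ≤ k →
        h k (ε * r) / h ℓ (ε * r)
          ≤ C * ε ^ max ((k : ℝ) / 2 - γ) 0 * (h k r / h ℓ r) := by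
  have h2N : (2:ℝ) ≤ (N:ℝ) := by exact_mod_cast hN
  have hd0 : (0:ℝ) ≤ (N:ℝ) - 2 := by linarith
  have hN0 : (0:ℝ) ≤ (N:ℝ) := by linarith
  -- basic facts about ω
  have hωformula : ∀ k : ℕ, omegaEV N k = (k:ℝ)^2 + ((N:ℝ)-2) * k := by
    intro k; simp only [omegaEV]; ring
  have hω0 : ∀ k : ℕ, 0 ≤ omegaEV N k := by
    intro k
    rw [hωformula]
    have hk0 := (Nat.cast_nonneg k : (0:ℝ) ≤ k)
    have := mul_nonneg hd0 hk0
    positivity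
  have hωmono : ∀ j k : ℕ, j < k → omegaEV N j < omegaEV N k := by
    intro j k hjk
    rw [hωformula, hωformula]
    have h1 : (j:ℝ) < (k:ℝ) := by exact_mod_cast hjk
    have h2 : (0:ℝ) ≤ (j:ℝ) := Nat.cast_nonneg j
    nlinarith
  have hlamd : 0 ≤ ((N:ℝ)-2)^2 + 4 * lam1 := by linarith
  have hA1mono : ∀ j k : ℕ, j < k →
      Aplus N (lam1 + omegaEV N j) < Aplus N (lam1 + omegaEV N k) :=
    fun j k hjk => Aplus_strictMono N (by linarith [hω0 j]) (by linarith [hωmono j k hjk])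
  have hA1low : ∀ k : ℕ, (k:ℝ) - ((N:ℝ)-2) / 2 ≤ Aplus N (lam1 + omegaEV N k) := by
    intro k
    have hk0 : (0:ℝ) ≤ (k:ℝ) := Nat.cast_nonneg k
    apply le_Aplus
    · linarith
    · rw [hωformula]
      nlinarith [mul_nonneg hd0 hk0]
  -- the global bound on |V|
  obtain ⟨Λ, hΛeq⟩ : ∃ L : ℝ, L = max |lam1| |lam2| + K := ⟨_, rfl⟩
  have hΛ0 : 0 < Λ := by
    have : (0:ℝ) ≤ max |lam1| |lam2| := le_max_iff.mpr (Or.inl (abs_nonneg _))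
    rw [hΛeq]; linarith
  have hVb : ∀ r : ℝ, 0 < r → |V r| ≤ Λ * r ^ (-2:ℝ) := by
    intro r hr
    have hrp : (0:ℝ) < r ^ (-2:ℝ) := Real.rpow_pos_of_pos hr _
    rcases le_or_gt r 1 with hle | hgt
    · have h1 := hV0 r hr hle
      have h2 : r ^ (-2 + ρ1) ≤ r ^ (-2:ℝ) :=
        Real.rpow_le_rpow_of_exponent_ge hr hle (by linarith)
      have h3 : |lam1 * r ^ (-2:ℝ)| = |lam1| * r ^ (-2:ℝ) := by
        rw [abs_mul, abs_of_pos hrp]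
      have h4 : |V r| ≤ |V r - lam1 * r ^ (-2:ℝ)| + |lam1 * r ^ (-2:ℝ)| := by
        calc |V r| = |(V r - lam1 * r ^ (-2:ℝ)) + lam1 * r ^ (-2:ℝ)| := by ring_nf
          _ ≤ _ := abs_add_le _ _
      have h5 : |lam1| ≤ max |lam1| |lam2| := le_max_left _ _
      have h6 : K * r ^ (-2+ρ1) ≤ K * r ^ (-2:ℝ) :=
        mul_le_mul_of_nonneg_left h2 hK.le
      calc |V r| ≤ K * r ^ (-2+ρ1) + |lam1| * r ^ (-2:ℝ) := by rw [h3] at h4; linarith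
        _ ≤ K * r ^ (-2:ℝ) + max |lam1| |lam2| * r ^ (-2:ℝ) := by
            have := mul_le_mul_of_nonneg_right h5 hrp.le
            linarith
        _ = Λ * r ^ (-2:ℝ) := by rw [hΛeq]; ring
    · have h1 := hVinf r hgt.le
      have h2 : r ^ (-2 - ρ2) ≤ r ^ (-2:ℝ) :=
        Real.rpow_le_rpow_of_exponent_le hgt.le (by linarith)
      have h3 : |lam2 * r ^ (-2:ℝ)| = |lam2| * r ^ (-2:ℝ) := by
        rw [abs_mul, abs_of_pos hrp]
      have h4 : |V r| ≤ |V r - lam2 * r ^ (-2:ℝ)| + |lam2 * r ^ (-2:ℝ)| := by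
        calc |V r| = |(V r - lam2 * r ^ (-2:ℝ)) + lam2 * r ^ (-2:ℝ)| := by ring_nf
          _ ≤ _ := abs_add_le _ _
      have h5 : |lam2| ≤ max |lam1| |lam2| := le_max_right _ _
      have h6 : K * r ^ (-2-ρ2) ≤ K * r ^ (-2:ℝ) :=
        mul_le_mul_of_nonneg_left h2 hK.le
      calc |V r| ≤ K * r ^ (-2-ρ2) + |lam2| * r ^ (-2:ℝ) := by rw [h3] at h4; linarith
        _ ≤ K * r ^ (-2:ℝ) + max |lam1| |lam2| * r ^ (-2:ℝ) := by
            have := mul_le_mul_of_nonneg_right h5 hrp.le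
            linarith
        _ = Λ * r ^ (-2:ℝ) := by rw [hΛeq]; ring
  -- the upper barrier exponent U
  have hAΛeq : Aplus N (Λ + omegaEV N ℓ) * (Aplus N (Λ + omegaEV N ℓ) + ((N:ℝ)-2))
      = Λ + omegaEV N ℓ := by
    apply Aplus_identity
    have := hω0 ℓ
    nlinarith [sq_nonneg ((N:ℝ)-2)]
  have hAΛ0 : 0 ≤ Aplus N (Λ + omegaEV N ℓ) :=
    Aplus_nonneg N (by linarith [hω0 ℓ]) hN
  obtain ⟨U, hUeq⟩ : ∃ u : ℝ,
      u = max (Aplus N (Λ + omegaEV N ℓ)) (Aplus N (lam1 + omegaEV N ℓ)) + 1 := ⟨_, rfl⟩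
  have hUAΛ : Aplus N (Λ + omegaEV N ℓ) ≤ U := by
    rw [hUeq]; linarith [le_max_left (Aplus N (Λ + omegaEV N ℓ)) (Aplus N (lam1 + omegaEV N ℓ))]
  have hU0 : (0:ℝ) ≤ U := le_trans hAΛ0 hUAΛ
  have hUA1 : Aplus N (lam1 + omegaEV N ℓ) < U := by
    rw [hUeq]
    linarith [le_max_right (Aplus N (Λ + omegaEV N ℓ)) (Aplus N (lam1 + omegaEV N ℓ))]
  have hU1 : Λ + omegaEV N ℓ ≤ U * (U + ((N:ℝ)-2)) := by
    nlinarith [hUAΛ, hAΛ0, hd0, hAΛeq]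
  -- the constant γ
  obtain ⟨γ, hγeq⟩ : ∃ g : ℝ, g = Λ + U + (N:ℝ) + 5 := ⟨_, rfl⟩
  have hγ0 : 0 < γ := by rw [hγeq]; linarith
  have hγU : U ≤ γ := by rw [hγeq]; linarith
  -- derivative plumbing
  have hd1 : ∀ k : ℕ, ∀ r ∈ Set.Ioi (0:ℝ), HasDerivAt (h k) (deriv (h k) r) r := by
    intro k r hr
    have h1 : DifferentiableOn ℝ (h k) (Set.Ioi 0) :=
      (hsmooth k).differentiableOn (by simp)
    exact (h1.differentiableAt (isOpen_Ioi.mem_nhds hr)).hasDerivAt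
  have hd2 : ∀ k : ℕ, ∀ r ∈ Set.Ioi (0:ℝ), HasDerivAt (deriv (h k))
      ((V r + omegaEV N k * r ^ (-2:ℝ)) * h k r - ((N:ℝ)-1) / r * deriv (h k) r) r := by
    intro k r hr
    have h2 : ContDiffOn ℝ 1 (deriv (h k)) (Set.Ioi 0) := by
      apply (hsmooth k).deriv_of_isOpen isOpen_Ioi
      exact_mod_cast (by omega : 1 + 1 ≤ m + 2)
    have h3 : DifferentiableOn ℝ (deriv (h k)) (Set.Ioi 0) := h2.differentiableOn one_ne_zero
    have base : HasDerivAt (deriv (h k)) (deriv (deriv (h k)) r) r :=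
      (h3.differentiableAt (isOpen_Ioi.mem_nhds hr)).hasDerivAt
    have heq : deriv (deriv (h k)) r
        = (V r + omegaEV N k * r ^ (-2:ℝ)) * h k r - ((N:ℝ)-1) / r * deriv (h k) r := by
      have h0 := hODE k r hr
      linarith
    rwa [heq] at base
  -- limits at 0⁺
  have lim1 : ∀ k : ℕ, ℓ < k →
      Filter.Tendsto (fun r => h k r / h ℓ r) (nhdsWithin 0 (Set.Ioi 0)) (nhds 0) := by
    intro k hk
    have ta := hzero k
    have tb := hzero ℓ
    have tc := rpow_tendsto_zero
      (show 0 < Aplus N (lam1 + omegaEV N k) - Aplus N (lam1 + omegaEV N ℓ) from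
        sub_pos.mpr (hA1mono ℓ k hk))
    have tall := (ta.mul tc).div tb (one_ne_zero)
    rw [show ((1:ℝ) * 0 / 1 : ℝ) = 0 by norm_num] at tall
    apply tall.congr'
    filter_upwards [self_mem_nhdsWithin] with r hr
    have hr0 : (0:ℝ) < r := hr
    have e : r ^ (-(Aplus N (lam1 + omegaEV N k)))
        * r ^ (Aplus N (lam1 + omegaEV N k) - Aplus N (lam1 + omegaEV N ℓ))
        = r ^ (-(Aplus N (lam1 + omegaEV N ℓ))) := by
      rw [← Real.rpow_add hr0]; congr 1; ring
    calc r ^ (-(Aplus N (lam1 + omegaEV N k))) * h k r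
          * r ^ (Aplus N (lam1 + omegaEV N k) - Aplus N (lam1 + omegaEV N ℓ))
          / (r ^ (-(Aplus N (lam1 + omegaEV N ℓ))) * h ℓ r)
        = (r ^ (-(Aplus N (lam1 + omegaEV N k)))
            * r ^ (Aplus N (lam1 + omegaEV N k) - Aplus N (lam1 + omegaEV N ℓ))) * h k r
          / (r ^ (-(Aplus N (lam1 + omegaEV N ℓ))) * h ℓ r) := by ring_nf
      _ = r ^ (-(Aplus N (lam1 + omegaEV N ℓ))) * h k r
          / (r ^ (-(Aplus N (lam1 + omegaEV N ℓ))) * h ℓ r) := by rw [e]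
      _ = h k r / h ℓ r := mul_div_mul_left _ _ (ne_of_gt (Real.rpow_pos_of_pos hr0 _))
  have lim2 : Filter.Tendsto (fun r : ℝ => r ^ U / h ℓ r) (nhdsWithin 0 (Set.Ioi 0)) (nhds 0) := by
    have tb := hzero ℓ
    have tc := rpow_tendsto_zero
      (show 0 < U - Aplus N (lam1 + omegaEV N ℓ) from sub_pos.mpr hUA1)
    have tall := tc.div tb (one_ne_zero)
    rw [show ((0:ℝ) / 1 : ℝ) = 0 by norm_num] at tall
    apply tall.congr'
    filter_upwards [self_mem_nhdsWithin] with r hr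
    have hr0 : (0:ℝ) < r := hr
    have e : r ^ (U - Aplus N (lam1 + omegaEV N ℓ))
        = r ^ (-(Aplus N (lam1 + omegaEV N ℓ))) * r ^ U := by
      rw [← Real.rpow_add hr0]; congr 1; ring
    calc r ^ (U - Aplus N (lam1 + omegaEV N ℓ))
          / (r ^ (-(Aplus N (lam1 + omegaEV N ℓ))) * h ℓ r)
        = (r ^ (-(Aplus N (lam1 + omegaEV N ℓ))) * r ^ U)
          / (r ^ (-(Aplus N (lam1 + omegaEV N ℓ))) * h ℓ r) := by rw [e]
      _ = r ^ U / h ℓ r := mul_div_mul_left _ _ (ne_of_gt (Real.rpow_pos_of_pos hr0 _))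
  have lim3 : ∀ k : ℕ, (k:ℝ)/2 < Aplus N (lam1 + omegaEV N k) →
      Filter.Tendsto (fun r : ℝ => h k r / r ^ ((k:ℝ)/2)) (nhdsWithin 0 (Set.Ioi 0)) (nhds 0) := by
    intro k hδ
    have ta := hzero k
    have tc := rpow_tendsto_zero
      (show 0 < Aplus N (lam1 + omegaEV N k) - (k:ℝ)/2 from sub_pos.mpr hδ)
    have tall := ta.mul tc
    rw [show ((1:ℝ) * 0 : ℝ) = 0 by norm_num] at tall
    apply tall.congr'
    filter_upwards [self_mem_nhdsWithin] with r hr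
    have hr0 : (0:ℝ) < r := hr
    have e : r ^ (-(Aplus N (lam1 + omegaEV N k)))
        * r ^ (Aplus N (lam1 + omegaEV N k) - (k:ℝ)/2) = (r ^ ((k:ℝ)/2))⁻¹ := by
      rw [← Real.rpow_add hr0, ← Real.rpow_neg hr0.le]; congr 1; ring
    calc r ^ (-(Aplus N (lam1 + omegaEV N k))) * h k r
          * r ^ (Aplus N (lam1 + omegaEV N k) - (k:ℝ)/2)
        = (r ^ (-(Aplus N (lam1 + omegaEV N k)))
            * r ^ (Aplus N (lam1 + omegaEV N k) - (k:ℝ)/2)) * h k r := by ring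
      _ = (r ^ ((k:ℝ)/2))⁻¹ * h k r := by rw [e]
      _ = h k r / r ^ ((k:ℝ)/2) := by rw [inv_mul_eq_div]
  -- monotonicity of h k / h ℓ
  have mono1 : ∀ k : ℕ, ℓ < k → MonotoneOn (fun t => h k t / h ℓ t) (Set.Ioi 0) := by
    intro k hk
    apply core_mono ((N:ℝ)-1) (h k) (deriv (h k)) (h ℓ) (deriv (h ℓ))
      (fun r => V r + omegaEV N k * r ^ (-2:ℝ)) (fun r => V r + omegaEV N ℓ * r ^ (-2:ℝ))
      (hd1 k) (hd2 k) (hd1 ℓ) (hd2 ℓ)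
      (fun r hr => hpos k r hr) (fun r hr => hpos ℓ r hr)
    · intro r hr
      have := mul_le_mul_of_nonneg_right (hωmono ℓ k hk).le
        (Real.rpow_nonneg (le_of_lt (show (0:ℝ) < r from hr)) (-2:ℝ))
      linarith
    · exact lim1 k hk
  -- monotonicity of r^U / h ℓ
  have mono2 : MonotoneOn (fun t : ℝ => t ^ U / h ℓ t) (Set.Ioi 0) := by
    apply core_mono ((N:ℝ)-1) (fun t : ℝ => t ^ U) (fun t : ℝ => U * t ^ (U-1))
      (h ℓ) (deriv (h ℓ))
      (fun r => U * (U + ((N:ℝ)-1) - 1) * r ^ (-2:ℝ))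
      (fun r => V r + omegaEV N ℓ * r ^ (-2:ℝ))
      (fun r hr => Real.hasDerivAt_rpow_const (Or.inl (ne_of_gt hr)))
      (fun r hr => barrier_deriv U ((N:ℝ)-1) r hr)
      (hd1 ℓ) (hd2 ℓ)
      (fun r hr => Real.rpow_pos_of_pos hr U) (fun r hr => hpos ℓ r hr)
    · intro r hr
      have hr0 : (0:ℝ) < r := hr
      have hrp : (0:ℝ) < r ^ (-2:ℝ) := Real.rpow_pos_of_pos hr0 _
      have hv : V r ≤ Λ * r ^ (-2:ℝ) := (abs_le.mp (hVb r hr0)).2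
      have key : (Λ + omegaEV N ℓ) * r ^ (-2:ℝ) ≤ U * (U + ((N:ℝ)-2)) * r ^ (-2:ℝ) :=
        mul_le_mul_of_nonneg_right hU1 hrp.le
      nlinarith [key, hv]
    · exact lim2
  -- monotonicity of h k / r^(k/2) for large k
  have mono3 : ∀ k : ℕ, 2*γ ≤ (k:ℝ) →
      MonotoneOn (fun t : ℝ => h k t / t ^ ((k:ℝ)/2)) (Set.Ioi 0) := by
    intro k hbig
    have hk0 : (0:ℝ) ≤ (k:ℝ) := Nat.cast_nonneg k
    have hγk : 2*(Λ + U + (N:ℝ) + 5) ≤ (k:ℝ) := by rw [← hγeq]; exact hbig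
    have hk10 : (10:ℝ) ≤ (k:ℝ) := by linarith [hΛ0, hU0, hN0]
    have hb1 : 2*(Λ + U + (N:ℝ) + 5)*(k:ℝ) ≤ (k:ℝ)*(k:ℝ) :=
      mul_le_mul_of_nonneg_right hγk hk0
    have hb2 : 10*Λ ≤ (k:ℝ)*Λ := mul_le_mul_of_nonneg_right hk10 hΛ0.le
    have hb3 : (0:ℝ) ≤ U*(k:ℝ) := mul_nonneg hU0 hk0
    have hb4 : (0:ℝ) ≤ (N:ℝ)*(k:ℝ) := mul_nonneg hN0 hk0
    have hnum : ((k:ℝ)/2) * ((k:ℝ)/2 + ((N:ℝ)-2)) + Λ ≤ omegaEV N k := by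
      rw [hωformula]
      nlinarith [hb1, hb2, hb3, hb4]
    apply core_mono ((N:ℝ)-1) (h k) (deriv (h k)) (fun t : ℝ => t ^ ((k:ℝ)/2))
      (fun t : ℝ => ((k:ℝ)/2) * t ^ ((k:ℝ)/2-1))
      (fun r => V r + omegaEV N k * r ^ (-2:ℝ))
      (fun r => ((k:ℝ)/2) * ((k:ℝ)/2 + ((N:ℝ)-1) - 1) * r ^ (-2:ℝ))
      (hd1 k) (hd2 k)
      (fun r hr => Real.hasDerivAt_rpow_const (Or.inl (ne_of_gt hr)))
      (fun r hr => barrier_deriv ((k:ℝ)/2) ((N:ℝ)-1) r hr)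
      (fun r hr => hpos k r hr)
      (fun r hr => Real.rpow_pos_of_pos hr _)
    · intro r hr
      have hr0 : (0:ℝ) < r := hr
      have hrp : (0:ℝ) < r ^ (-2:ℝ) := Real.rpow_pos_of_pos hr0 _
      have hv : -(Λ * r ^ (-2:ℝ)) ≤ V r := neg_le_of_abs_le (hVb r hr0)
      have key : (((k:ℝ)/2) * ((k:ℝ)/2 + ((N:ℝ)-2)) + Λ) * r ^ (-2:ℝ)
          ≤ omegaEV N k * r ^ (-2:ℝ) :=
        mul_le_mul_of_nonneg_right hnum hrp.le
      nlinarith [key, hv]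
    · apply lim3
      have := hA1low k
      have hγN : (N:ℝ) ≤ γ := by rw [hγeq]; linarith
      linarith
  -- conclusion
  refine ⟨1, one_pos, γ, hγ0, ?_⟩
  intro r hr ε hε0 hε1 k hk
  have hs0 : (0:ℝ) < ε * r := mul_pos hε0 hr
  have hsr : ε * r ≤ r := by nlinarith
  have hsmem : ε * r ∈ Set.Ioi (0:ℝ) := hs0
  have hrmem : r ∈ Set.Ioi (0:ℝ) := hr
  rcases lt_or_ge ((k:ℝ)) (2*γ) with hsmall | hbig
  · -- small k : exponent is 0, use monotonicity of h k / h ℓ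
    have hmax : max ((k:ℝ)/2 - γ) 0 = 0 := max_eq_right (by linarith)
    rw [hmax, Real.rpow_zero, one_mul, one_mul]
    exact mono1 k (by omega) hsmem hrmem hsr
  · -- large k
    have hγk2 : γ ≤ (k:ℝ)/2 := by linarith
    have hδU : U ≤ (k:ℝ)/2 := le_trans hγU hγk2
    have e1 : h k (ε*r) / (ε*r) ^ ((k:ℝ)/2) ≤ h k r / r ^ ((k:ℝ)/2) :=
      mono3 k hbig hsmem hrmem hsr
    have e2 : (ε*r) ^ U / h ℓ (ε*r) ≤ r ^ U / h ℓ r := mono2 hsmem hrmem hsr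
    have hεδ : (ε*r) ^ ((k:ℝ)/2) = ε ^ ((k:ℝ)/2) * r ^ ((k:ℝ)/2) :=
      Real.mul_rpow hε0.le hr.le
    have hεU : (ε*r) ^ U = ε ^ U * r ^ U := Real.mul_rpow hε0.le hr.le
    have hp1 : (0:ℝ) < (ε*r) ^ ((k:ℝ)/2) := Real.rpow_pos_of_pos hs0 _
    have hp2 : (0:ℝ) < (ε*r) ^ U := Real.rpow_pos_of_pos hs0 _
    have hp3 : (0:ℝ) < r ^ ((k:ℝ)/2) := Real.rpow_pos_of_pos hr _
    have hp4 : (0:ℝ) < r ^ U := Real.rpow_pos_of_pos hr _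
    have hps : (0:ℝ) < h ℓ (ε*r) := hpos ℓ _ hs0
    have hpr : (0:ℝ) < h ℓ r := hpos ℓ _ hr
    have hks : (0:ℝ) < h k (ε*r) := hpos k _ hs0
    have hkr : (0:ℝ) < h k r := hpos k _ hr
    have hmid : (0:ℝ) ≤ (ε*r) ^ ((k:ℝ)/2) / (ε*r) ^ U := le_of_lt (div_pos hp1 hp2)
    have step1 : h k (ε*r) / h ℓ (ε*r)
        = (h k (ε*r) / (ε*r) ^ ((k:ℝ)/2)) * ((ε*r) ^ ((k:ℝ)/2) / (ε*r) ^ U)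
          * ((ε*r) ^ U / h ℓ (ε*r)) := by
      field_simp
    have step2 : (h k (ε*r) / (ε*r) ^ ((k:ℝ)/2)) * ((ε*r) ^ ((k:ℝ)/2) / (ε*r) ^ U)
          * ((ε*r) ^ U / h ℓ (ε*r))
        ≤ (h k r / r ^ ((k:ℝ)/2)) * ((ε*r) ^ ((k:ℝ)/2) / (ε*r) ^ U) * (r ^ U / h ℓ r) := by
      apply mul_le_mul (mul_le_mul_of_nonneg_right e1 hmid) e2
        (le_of_lt (div_pos hp2 hps))
        (mul_nonneg (le_of_lt (div_pos hkr hp3)) hmid)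
    have step3 : (h k r / r ^ ((k:ℝ)/2)) * ((ε*r) ^ ((k:ℝ)/2) / (ε*r) ^ U) * (r ^ U / h ℓ r)
        = ε ^ ((k:ℝ)/2 - U) * (h k r / h ℓ r) := by
      rw [hεδ, hεU, Real.rpow_sub hε0]
      have h1 : (0:ℝ) < ε ^ ((k:ℝ)/2) := Real.rpow_pos_of_pos hε0 _
      have h2 : (0:ℝ) < ε ^ U := Real.rpow_pos_of_pos hε0 _
      field_simp
    have hmaxle : max ((k:ℝ)/2 - γ) 0 ≤ (k:ℝ)/2 - U := by
      apply max_le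
      · linarith
      · linarith
    have step4 : ε ^ ((k:ℝ)/2 - U) ≤ ε ^ max ((k:ℝ)/2 - γ) 0 :=
      Real.rpow_le_rpow_of_exponent_ge hε0 hε1.le hmaxle
    calc h k (ε*r) / h ℓ (ε*r)
        = (h k (ε*r) / (ε*r) ^ ((k:ℝ)/2)) * ((ε*r) ^ ((k:ℝ)/2) / (ε*r) ^ U)
          * ((ε*r) ^ U / h ℓ (ε*r)) := step1
      _ ≤ (h k r / r ^ ((k:ℝ)/2)) * ((ε*r) ^ ((k:ℝ)/2) / (ε*r) ^ U) * (r ^ U / h ℓ r) := step2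
      _ = ε ^ ((k:ℝ)/2 - U) * (h k r / h ℓ r) := step3
      _ ≤ 1 * ε ^ max ((k:ℝ)/2 - γ) 0 * (h k r / h ℓ r) := by
          rw [one_mul]
          exact mul_le_mul_of_nonneg_right step4 (le_of_lt (div_pos hkr hpr))
end

section
/- Under the standing setup, there exists a constant C > 0 with the following property: for every pair (p,σ) with 1 ≤ p ≤ ∞, 1 ≤ σ ≤ ∞, σ = 1 if p = 1, σ = ∞ if p = ∞, and such that the function x ↦ h₀(|x|) restricted to the unit ball B(0,1) ⊂ ℝ^N has finite Lorentz quasinorm ‖·‖_{L^{p,σ}}, one has ‖x ↦ h₀(|x|)‖_{L^{p,σ}(B(0,√t))} ≥ C t^{N/(2p)} h₀(√t) for all t > 0 (with the convention N/(2p) = 0 when p = ∞); the constant C does not depend on (p,σ). -/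
open MeasureTheory
open scoped ENNReal

/-- The non-increasing rearrangement `φ*` of a function `φ` on `ℝ^N`. -/
noncomputable def rearr (N : ℕ) (φ : EuclideanSpace ℝ (Fin N) → ℝ) (s : ℝ) : ℝ :=
  sInf {lam : ℝ | 0 < lam ∧ volume {x | lam < |φ x|} ≤ ENNReal.ofReal s}

/-- The Lorentz `L^{p,σ}` quasinorm of a function `φ` on `ℝ^N`, with
`p, σ ∈ [1,∞]` encoded as extended nonnegative reals. -/
noncomputable def lorentzNorm (N : ℕ) (p σ : ℝ≥0∞) (φ : EuclideanSpace ℝ (Fin N) → ℝ) :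
    ℝ≥0∞ :=
  let pe : ℝ := if p = ∞ then 0 else 1 / p.toReal
  if σ = ∞ then ⨆ s ∈ Set.Ioi (0 : ℝ), ENNReal.ofReal (s ^ pe * rearr N φ s)
  else (∫⁻ s in Set.Ioi (0 : ℝ),
    ENNReal.ofReal ((s ^ pe * rearr N φ s) ^ σ.toReal / s)) ^ (1 / σ.toReal)

/-- The Lorentz quasinorm of `φ` restricted to `Ω` (extension by zero). -/
noncomputable def lorentzNormOn (N : ℕ) (p σ : ℝ≥0∞)
    (Ω : Set (EuclideanSpace ℝ (Fin N))) (φ : EuclideanSpace ℝ (Fin N) → ℝ) : ℝ≥0∞ :=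
  lorentzNorm N p σ (Ω.indicator φ)

set_option maxHeartbeats 1000000

section Helpers
open Real Set Filter Metric
open MeasureTheory Set

lemma lint_rpow {a s0 : ℝ} (ha : 0 < a) (hs0 : 0 < s0) :
    ENNReal.ofReal (s0 ^ a / a) ≤ ∫⁻ s in Set.Ioo 0 s0, ENNReal.ofReal (s ^ (a - 1)) := by
  have hint : IntegrableOn (fun s : ℝ => s ^ (a - 1)) (Ioo 0 s0) := by
    rw [← intervalIntegrable_iff_integrableOn_Ioo_of_le hs0.le]
    exact intervalIntegral.intervalIntegrable_rpow' (by linarith)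
  have hnn : 0 ≤ᵐ[volume.restrict (Ioo 0 s0)] fun s : ℝ => s ^ (a - 1) := by
    filter_upwards [ae_restrict_mem measurableSet_Ioo] with s hs
    exact Real.rpow_nonneg hs.1.le _
  rw [← ofReal_integral_eq_lintegral_ofReal hint hnn]
  apply ENNReal.ofReal_le_ofReal
  have : ∫ s in Ioo 0 s0, s ^ (a - 1) = ∫ s in (0:ℝ)..s0, s ^ (a - 1) := by
    rw [intervalIntegral.integral_of_le hs0.le, ← integral_Ioc_eq_integral_Ioo]
  rw [this, integral_rpow (Or.inl (by linarith))]
  rw [sub_add_cancel, Real.zero_rpow ha.ne', sub_zero]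


lemma rpow_ge_min {x e : ℝ} (hx : 0 < x) (he0 : 0 ≤ e) (he1 : e ≤ 1) :
    min x 1 ≤ x ^ e := by
  rcases le_total 1 x with h | h
  · have : (1:ℝ) ≤ x ^ e := Real.one_le_rpow h he0
    simpa [min_def, h] using le_trans (min_le_right x 1) this
  · have : x ^ (1:ℝ) ≤ x ^ e := Real.rpow_le_rpow_of_exponent_ge hx h he1
    rw [Real.rpow_one] at this
    exact le_trans (min_le_left x 1) this

lemma rpow_inv_le_two {a σ : ℝ} (ha : 0 < a) (hσ1 : 1 ≤ σ) (haσ : a ≤ σ) :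
    a ^ (1 / σ) ≤ 2 := by
  rcases le_total a 1 with h | h
  · calc a ^ (1/σ) ≤ 1 ^ (1/σ) := Real.rpow_le_rpow ha.le h (by positivity)
    _ = 1 := Real.one_rpow _
    _ ≤ 2 := one_le_two
  · have hσ0 : 0 < σ := by linarith
    have hlog : Real.log a ≤ σ * Real.log 2 := by
      have h1 : Real.log a ≤ Real.log σ := Real.log_le_log (by linarith) haσ
      have h2 : Real.log σ ≤ σ / Real.exp 1 := by
        have := Real.log_le_sub_one_of_pos (x := σ / Real.exp 1) (by positivity)
        rw [Real.log_div (by linarith) (Real.exp_ne_zero 1), Real.log_exp] at this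
        linarith
      have h3 : σ / Real.exp 1 ≤ σ * Real.log 2 := by
        rw [div_eq_mul_inv]
        apply mul_le_mul_of_nonneg_left _ hσ0.le
        have e1 : (2:ℝ) ≤ Real.exp 1 := by
          have := Real.add_one_le_exp (1:ℝ); linarith
        have e2 : (Real.exp 1)⁻¹ ≤ 2⁻¹ := inv_anti₀ two_pos e1
        have h4 : (0.6931471803 : ℝ) ≤ Real.log 2 := Real.log_two_gt_d9.le
        calc (Real.exp 1)⁻¹ ≤ 2⁻¹ := e2
        _ ≤ Real.log 2 := by norm_num; linarith
      linarith
    have heq : a ^ (1/σ) = Real.exp (Real.log a * (1/σ)) := Real.rpow_def_of_pos (by linarith) _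
    rw [heq]
    have h5 : Real.log a * (1/σ) ≤ Real.log 2 := by
      rw [mul_one_div, div_le_iff₀ hσ0]
      linarith [hlog]
    calc Real.exp (Real.log a * (1/σ)) ≤ Real.exp (Real.log 2) := Real.exp_le_exp.mpr h5
    _ = 2 := Real.exp_log two_pos

open Real Set Filter

lemma doubling (h0 : ℝ → ℝ) (A1 A20 c0 : ℝ) (B0 : ℕ) (hB0 : B0 ≤ 1) (hc0 : 0 < c0)
    (hpos : ∀ r : ℝ, 0 < r → 0 < h0 r)
    (hcont : ContinuousOn h0 (Set.Ioi 0))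
    (hzero : Filter.Tendsto (fun r : ℝ => r ^ (-A1) * h0 r)
      (nhdsWithin 0 (Set.Ioi 0)) (nhds 1))
    (hinfty : Filter.Tendsto (fun r : ℝ => h0 r / (r ^ A20 * Real.log r ^ B0))
      Filter.atTop (nhds c0)) :
    ∃ c : ℝ, 0 < c ∧ ∀ u q : ℝ, 0 < u → 1/2 ≤ q → q ≤ 1 → c * h0 u ≤ h0 (q * u) := by
  -- near zero
  have hz : ∀ᶠ r in nhdsWithin 0 (Set.Ioi 0), |r ^ (-A1) * h0 r - 1| < 1/2 := by
    have := hzero (Metric.ball_mem_nhds 1 (by norm_num : (0:ℝ) < 1/2))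
    filter_upwards [this] with r hr
    simpa [Real.dist_eq] using hr
  obtain ⟨δ', hδ'pos, hδ'⟩ := Metric.mem_nhdsWithin_iff.mp hz
  set δ : ℝ := min δ' 1 with hδdef
  have hδpos : 0 < δ := lt_min hδ'pos one_pos
  have hδ1 : δ ≤ 1 := min_le_right _ _
  have hbound0 : ∀ r : ℝ, 0 < r → r < δ → 1/2 * r ^ A1 ≤ h0 r ∧ h0 r ≤ 3/2 * r ^ A1 := by
    intro r hr hrδ
    have h1 : |r ^ (-A1) * h0 r - 1| < 1/2 := hδ' ⟨by
      simp only [Metric.mem_ball, Real.dist_eq, sub_zero, abs_of_pos hr]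
      exact lt_of_lt_of_le hrδ (min_le_left _ _), hr⟩
    rw [abs_lt] at h1
    have hrA : (0:ℝ) < r ^ A1 := Real.rpow_pos_of_pos hr _
    have key : r ^ (-A1) * h0 r * r ^ A1 = h0 r := by
      rw [Real.rpow_neg hr.le]
      field_simp
    constructor
    · nlinarith [h1.1, hrA]
    · nlinarith [h1.2, hrA]
  -- near infinity
  have hi : ∀ᶠ r in Filter.atTop, |h0 r / (r ^ A20 * Real.log r ^ B0) - c0| < c0/2 := by
    have := hinfty (Metric.ball_mem_nhds c0 (by positivity : (0:ℝ) < c0/2))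
    filter_upwards [this] with r hr
    simpa [Real.dist_eq] using hr
  obtain ⟨R', hR'⟩ := hi.exists_forall_of_atTop
  set R : ℝ := max R' 4 with hRdef
  have hR4 : (4:ℝ) ≤ R := le_max_right _ _
  have hboundinf : ∀ r : ℝ, R ≤ r →
      c0/2 * (r ^ A20 * Real.log r ^ B0) ≤ h0 r ∧
      h0 r ≤ 3*c0/2 * (r ^ A20 * Real.log r ^ B0) := by
    intro r hr
    have hr4 : (4:ℝ) ≤ r := le_trans hR4 hr
    have hrpos : (0:ℝ) < r := by linarith
    have hlogpos : 0 < Real.log r := Real.log_pos (by linarith)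
    have hD : (0:ℝ) < r ^ A20 * Real.log r ^ B0 :=
      mul_pos (Real.rpow_pos_of_pos hrpos _) (pow_pos hlogpos _)
    have h1 := hR' r (le_trans (le_max_left _ _) hr)
    rw [abs_lt] at h1
    have key : h0 r / (r ^ A20 * Real.log r ^ B0) * (r ^ A20 * Real.log r ^ B0) = h0 r := by
      field_simp
    constructor
    · nlinarith [h1.1, hD]
    · nlinarith [h1.2, hD]
  -- middle compact part
  have hcomp : IsCompact (Set.Icc (δ/4) (2*R)) := isCompact_Icc
  have hne : (Set.Icc (δ/4) (2*R)).Nonempty := by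
    refine ⟨δ/4, le_refl _, ?_⟩
    have : δ/4 ≤ 1 := by linarith
    linarith
  have hsub : Set.Icc (δ/4) (2*R) ⊆ Set.Ioi 0 := fun x hx => lt_of_lt_of_le (by positivity) hx.1
  obtain ⟨xmin, hxmin, hmin⟩ := hcomp.exists_isMinOn hne (hcont.mono hsub)
  obtain ⟨xmax, hxmax, hmax⟩ := hcomp.exists_isMaxOn hne (hcont.mono hsub)
  have hM1 : 0 < h0 xmin := hpos _ (hsub hxmin)
  have hM2 : 0 < h0 xmax := hpos _ (hsub hxmax)
  -- constants
  set c1 : ℝ := 1/3 * min ((1/2:ℝ) ^ A1) 1 with hc1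
  set c2 : ℝ := h0 xmin / h0 xmax with hc2
  set c3 : ℝ := 1/6 * min ((1/2:ℝ) ^ A20) 1 with hc3
  have hc1p : 0 < c1 := by
    have : (0:ℝ) < (1/2:ℝ) ^ A1 := Real.rpow_pos_of_pos (by norm_num) _
    have := lt_min this one_pos
    positivity
  have hc2p : 0 < c2 := div_pos hM1 hM2
  have hc3p : 0 < c3 := by
    have : (0:ℝ) < (1/2:ℝ) ^ A20 := Real.rpow_pos_of_pos (by norm_num) _
    have := lt_min this one_pos
    positivity
  refine ⟨min c1 (min c2 c3), lt_min hc1p (lt_min hc2p hc3p), ?_⟩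
  intro u q hu hq1 hq2
  have hqpos : 0 < q := by linarith
  have hqu : 0 < q * u := mul_pos hqpos hu
  have hqA : ∀ A : ℝ, min ((1/2:ℝ) ^ A) 1 ≤ q ^ A := by
    intro A
    rcases le_or_gt 0 A with hA | hA
    · exact le_trans (min_le_left _ _) (Real.rpow_le_rpow (by norm_num) hq1 hA)
    · exact le_trans (min_le_right _ _)
        (Real.one_le_rpow_of_pos_of_le_one_of_nonpos hqpos hq2 hA.le)
  have hqu_le : q * u ≤ u := by nlinarith
  have hmin_le1 : min c1 (min c2 c3) ≤ c1 := min_le_left _ _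
  have hmin_le2 : min c1 (min c2 c3) ≤ c2 := le_trans (min_le_right _ _) (min_le_left _ _)
  have hmin_le3 : min c1 (min c2 c3) ≤ c3 := le_trans (min_le_right _ _) (min_le_right _ _)
  have hh0u : 0 < h0 u := hpos u hu
  rcases lt_or_ge u δ with hcase | hcase
  · -- low regime
    have hb1 := hbound0 u hu hcase
    have hb2 := hbound0 (q*u) hqu (lt_of_le_of_lt hqu_le hcase)
    have hqA1 := hqA A1
    have hmul : (q*u) ^ A1 = q ^ A1 * u ^ A1 := Real.mul_rpow hqpos.le hu.le
    have huA : (0:ℝ) < u ^ A1 := Real.rpow_pos_of_pos hu _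
    calc min c1 (min c2 c3) * h0 u ≤ c1 * h0 u :=
          mul_le_mul_of_nonneg_right hmin_le1 hh0u.le
    _ ≤ c1 * (3/2 * u ^ A1) := mul_le_mul_of_nonneg_left hb1.2 hc1p.le
    _ = 1/2 * (min ((1/2:ℝ) ^ A1) 1 * u ^ A1) := by rw [hc1]; ring
    _ ≤ 1/2 * (q ^ A1 * u ^ A1) := by
          apply mul_le_mul_of_nonneg_left (mul_le_mul_of_nonneg_right hqA1 huA.le) (by norm_num)
    _ = 1/2 * (q*u) ^ A1 := by rw [hmul]
    _ ≤ h0 (q * u) := hb2.1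
  rcases le_or_gt u (2*R) with hcase2 | hcase2
  · -- middle regime
    have humem : u ∈ Set.Icc (δ/4) (2*R) := ⟨by linarith, hcase2⟩
    have hqumem : q * u ∈ Set.Icc (δ/4) (2*R) := by
      constructor
      · nlinarith
      · linarith
    have h1 : h0 xmin ≤ h0 (q*u) := (isMinOn_iff.mp hmin) _ hqumem
    have h2 : h0 u ≤ h0 xmax := (isMaxOn_iff.mp hmax) _ humem
    calc min c1 (min c2 c3) * h0 u ≤ c2 * h0 u :=
          mul_le_mul_of_nonneg_right hmin_le2 hh0u.le
    _ ≤ c2 * h0 xmax := mul_le_mul_of_nonneg_left h2 hc2p.le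
    _ = h0 xmin := by rw [hc2]; field_simp
    _ ≤ h0 (q*u) := h1
  · -- high regime
    have hRu : R ≤ u := by linarith
    have hRqu : R ≤ q * u := by nlinarith
    have hb1 := hboundinf u hRu
    have hb2 := hboundinf (q*u) hRqu
    have hu4 : (4:ℝ) ≤ u := le_trans hR4 hRu
    have hlogu : Real.log 4 ≤ Real.log u := Real.log_le_log (by norm_num) hu4
    have hlog4 : Real.log 4 = 2 * Real.log 2 := by
      rw [show (4:ℝ) = 2^2 by norm_num, Real.log_pow]; push_cast; ring
    have hlogupos : 0 < Real.log u := Real.log_pos (by linarith)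
    have hlogq : 1/2 * Real.log u ≤ Real.log (q*u) := by
      rw [Real.log_mul hqpos.ne' (by positivity)]
      have : Real.log (1/2) ≤ Real.log q := Real.log_le_log (by norm_num) hq1
      rw [Real.log_div one_ne_zero two_ne_zero, Real.log_one] at this
      linarith
    have hA20 := hqA A20
    have hmul : (q*u) ^ A20 = q ^ A20 * u ^ A20 := Real.mul_rpow hqpos.le hu.le
    have huA : (0:ℝ) < u ^ A20 := Real.rpow_pos_of_pos hu _
    have hpowb : 1/2 * Real.log u ^ B0 ≤ Real.log (q*u) ^ B0 := by
      have hstep : (1/2 * Real.log u) ^ B0 ≤ Real.log (q*u) ^ B0 :=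
        pow_le_pow_left₀ (by positivity) hlogq _
      have : 1/2 * Real.log u ^ B0 ≤ (1/2 * Real.log u) ^ B0 := by
        rw [mul_pow]
        apply mul_le_mul_of_nonneg_right _ (by positivity)
        interval_cases B0 <;> norm_num
      linarith
    have key : c0/4 * (min ((1/2:ℝ) ^ A20) 1 * (u ^ A20 * Real.log u ^ B0)) ≤ h0 (q*u) := by
      have e1 : c0/2 * ((q*u) ^ A20 * Real.log (q*u) ^ B0) ≤ h0 (q*u) := hb2.1
      have e2 : min ((1/2:ℝ) ^ A20) 1 * u ^ A20 ≤ (q*u) ^ A20 := by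
        rw [hmul]; exact mul_le_mul_of_nonneg_right hA20 huA.le
      have e3 : (0:ℝ) < (q*u) ^ A20 := Real.rpow_pos_of_pos hqu _
      have e5 : (0:ℝ) ≤ 1/2 * Real.log u ^ B0 := by positivity
      calc c0/4 * (min ((1/2:ℝ) ^ A20) 1 * (u ^ A20 * Real.log u ^ B0))
          = c0/2 * ((min ((1/2:ℝ) ^ A20) 1 * u ^ A20) * (1/2 * Real.log u ^ B0)) := by ring
      _ ≤ c0/2 * ((q*u) ^ A20 * (1/2 * Real.log u ^ B0)) := by
            apply mul_le_mul_of_nonneg_left (mul_le_mul_of_nonneg_right e2 e5) (by positivity)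
      _ ≤ c0/2 * ((q*u) ^ A20 * Real.log (q*u) ^ B0) := by
            apply mul_le_mul_of_nonneg_left (mul_le_mul_of_nonneg_left hpowb e3.le) (by positivity)
      _ ≤ h0 (q*u) := e1
    calc min c1 (min c2 c3) * h0 u ≤ c3 * h0 u :=
          mul_le_mul_of_nonneg_right hmin_le3 hh0u.le
    _ ≤ c3 * (3*c0/2 * (u ^ A20 * Real.log u ^ B0)) :=
          mul_le_mul_of_nonneg_left hb1.2 hc3p.le
    _ = c0/4 * (min ((1/2:ℝ) ^ A20) 1 * (u ^ A20 * Real.log u ^ B0)) := by rw [hc3]; ring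
    _ ≤ h0 (q*u) := key

open MeasureTheory Set Metric


variable {N : ℕ}

lemma euclid_ball_vol (hN : 0 < N) {r : ℝ} (hr : 0 ≤ r) :
    volume (ball (0 : EuclideanSpace ℝ (Fin N)) r)
      = ENNReal.ofReal (r ^ N) * volume (ball (0 : EuclideanSpace ℝ (Fin N)) 1) := by
  have : Nontrivial (EuclideanSpace ℝ (Fin N)) := by
    have : Nonempty (Fin N) := ⟨⟨0, hN⟩⟩
    infer_instance
  rw [Measure.addHaar_ball volume _ hr, finrank_euclideanSpace_fin]

lemma rearr_set_nonempty (hN : 0 < N) (h0 : ℝ → ℝ)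
    (hpos : ∀ r : ℝ, 0 < r → 0 < h0 r) (hcont : ContinuousOn h0 (Set.Ioi 0))
    {rt s : ℝ} (hrt : 0 < rt) (hs : 0 < s) :
    {lam : ℝ | 0 < lam ∧
      volume {x : EuclideanSpace ℝ (Fin N) |
        lam < |((ball 0 rt).indicator (fun x => h0 ‖x‖)) x|} ≤ ENNReal.ofReal s}.Nonempty := by
  set B := volume (ball (0 : EuclideanSpace ℝ (Fin N)) 1) with hB
  have hBfin : B ≠ ⊤ := measure_ball_lt_top.ne
  set b : ℝ := B.toReal + 1 with hb
  have hbpos : 0 < b := by positivity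
  set ε : ℝ := min (rt/2) (min 1 (s / b)) with hε
  have hεpos : 0 < ε := by
    apply lt_min (by linarith)
    exact lt_min one_pos (by positivity)
  have hεrt : ε ≤ rt/2 := min_le_left _ _
  have hε1 : ε ≤ 1 := le_trans (min_le_right _ _) (min_le_left _ _)
  have hεs : ε ≤ s / b := le_trans (min_le_right _ _) (min_le_right _ _)
  have hεN : ε ^ N * B.toReal ≤ s := by
    have h1 : ε ^ N ≤ ε := pow_le_of_le_one hεpos.le hε1 hN.ne'
    have h2 : ε ≤ s / b := hεs
    have h3 : ε ^ N * B.toReal ≤ (s/b) * b := by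
      apply mul_le_mul (le_trans h1 h2) (by linarith) ENNReal.toReal_nonneg (by positivity)
    rw [div_mul_cancel₀ _ hbpos.ne'] at h3
    exact h3
  -- max of h0 on [ε, rt]
  obtain ⟨x0, hx0mem, hx0⟩ := (isCompact_Icc (a := ε) (b := rt)).exists_isMaxOn
    (Set.nonempty_Icc.mpr (by linarith : ε ≤ rt))
    (hcont.mono (fun x hx => lt_of_lt_of_le hεpos hx.1))
  refine ⟨h0 x0 + 1, ?_, ?_⟩
  · have := hpos x0 (lt_of_lt_of_le hεpos hx0mem.1)
    linarith
  · have hsub : {x : EuclideanSpace ℝ (Fin N) |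
        h0 x0 + 1 < |((ball 0 rt).indicator (fun x => h0 ‖x‖)) x|} ⊆ ball 0 ε := by
      intro x hx
      simp only [Set.mem_setOf_eq] at hx
      by_contra hxball
      rw [mem_ball, dist_zero_right, not_lt] at hxball
      rcases lt_or_ge ‖x‖ rt with hlt | hge
      · have hmem : x ∈ ball (0 : EuclideanSpace ℝ (Fin N)) rt := by
          rwa [mem_ball, dist_zero_right]
        rw [Set.indicator_of_mem hmem] at hx
        have h1 : h0 ‖x‖ ≤ h0 x0 := (isMaxOn_iff.mp hx0) ‖x‖ ⟨hxball, hlt.le⟩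
        have h2 : 0 < h0 ‖x‖ := hpos _ (lt_of_lt_of_le hεpos hxball)
        rw [abs_of_pos h2] at hx
        linarith
      · have hmem : x ∉ ball (0 : EuclideanSpace ℝ (Fin N)) rt := by
          rw [mem_ball, dist_zero_right]; exact not_lt.mpr hge
        rw [Set.indicator_of_notMem hmem] at hx
        simp only [abs_zero] at hx
        have := hpos x0 (lt_of_lt_of_le hεpos hx0mem.1)
        linarith
    calc volume {x : EuclideanSpace ℝ (Fin N) |
          h0 x0 + 1 < |((ball 0 rt).indicator (fun x => h0 ‖x‖)) x|}
        ≤ volume (ball (0 : EuclideanSpace ℝ (Fin N)) ε) := measure_mono hsub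
    _ = ENNReal.ofReal (ε ^ N) * B := euclid_ball_vol hN hεpos.le
    _ = ENNReal.ofReal (ε ^ N * B.toReal) := by
        rw [ENNReal.ofReal_mul (by positivity), ENNReal.ofReal_toReal hBfin]
    _ ≤ ENNReal.ofReal s := ENNReal.ofReal_le_ofReal hεN

lemma rearr_lb (hN : 0 < N) (h0 : ℝ → ℝ)
    (hpos : ∀ r : ℝ, 0 < r → 0 < h0 r) (hcont : ContinuousOn h0 (Set.Ioi 0))
    {c : ℝ} (hc : 0 < c)
    (hdbl : ∀ u q : ℝ, 0 < u → 1/2 ≤ q → q ≤ 1 → c * h0 u ≤ h0 (q * u))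
    {rt s : ℝ} (hrt : 0 < rt) (hs : 0 < s)
    (hss0 : ENNReal.ofReal s <
      volume (ball (0 : EuclideanSpace ℝ (Fin N)) rt \ ball 0 (rt/2))) :
    c * h0 rt ≤ rearr N ((ball 0 rt).indicator (fun x => h0 ‖x‖)) s := by
  apply le_csInf (rearr_set_nonempty hN h0 hpos hcont hrt hs)
  rintro lam ⟨hlam, hμ⟩
  by_contra hcon
  push_neg at hcon
  have hsub : ball (0 : EuclideanSpace ℝ (Fin N)) rt \ ball 0 (rt/2) ⊆
      {x | lam < |((ball 0 rt).indicator (fun x => h0 ‖x‖)) x|} := by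
    rintro x ⟨hx1, hx2⟩
    rw [mem_ball, dist_zero_right] at hx1
    rw [mem_ball, dist_zero_right, not_lt] at hx2
    have hxpos : 0 < ‖x‖ := by linarith
    simp only [Set.mem_setOf_eq]
    rw [Set.indicator_of_mem (by rwa [mem_ball, dist_zero_right])]
    have hq : c * h0 rt ≤ h0 (‖x‖ / rt * rt) := by
      apply hdbl rt (‖x‖/rt) hrt
      · rw [le_div_iff₀ hrt]; linarith
      · rw [div_le_one hrt]; exact hx1.le
    rw [div_mul_cancel₀ _ hrt.ne'] at hq
    have h2 : 0 < h0 ‖x‖ := hpos _ hxpos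
    rw [abs_of_pos h2]
    calc lam < c * h0 rt := hcon
    _ ≤ h0 ‖x‖ := hq
  have := measure_mono (μ := (volume : Measure (EuclideanSpace ℝ (Fin N)))) hsub
  exact absurd (le_trans this hμ) (not_le.mpr hss0)


end Helpers

/-- under the standing setup (for `k = 0`), there is `C > 0`, independent
of `(p,σ)`, such that whenever `x ↦ h₀(|x|)` has finite `L^{p,σ}` quasinorm on the unit
ball, one has `‖h₀(|·|)‖_{L^{p,σ}(B(0,√t))} ≥ C t^{N/(2p)} h₀(√t)` for all `t > 0`. -/
theorem stmt_11
    (N : ℕ) (hN : 2 ≤ N) (m : ℕ) (hm : 1 ≤ m)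
    (V : ℝ → ℝ) (lam1 lam2 ρ1 ρ2 K : ℝ)
    (hlam1 : -((N : ℝ) - 2) ^ 2 / 4 ≤ lam1) (hlam2 : -((N : ℝ) - 2) ^ 2 / 4 ≤ lam2)
    (hρ1 : 0 < ρ1) (hρ2 : 0 < ρ2) (hK : 0 < K)
    (hVsmooth : ContDiffOn ℝ m V (Set.Ioi 0))
    (hV0 : ∀ r : ℝ, 0 < r → r ≤ 1 → |V r - lam1 * r ^ (-2 : ℝ)| ≤ K * r ^ (-2 + ρ1))
    (hVinf : ∀ r : ℝ, 1 ≤ r → |V r - lam2 * r ^ (-2 : ℝ)| ≤ K * r ^ (-2 - ρ2))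
    (hVderiv : ∀ ℓ : ℕ, 1 ≤ ℓ → ℓ ≤ m → ∃ M : ℝ, ∀ r : ℝ, 0 < r →
      |r ^ (ℓ + 2) * iteratedDeriv ℓ V r| ≤ M)
    (A20 : ℝ) (B0 : ℕ)
    (hA20 : (A20 = Aplus N lam2 ∧
              ((lam2 = -((N : ℝ) - 2) ^ 2 / 4 ∧ B0 = 1) ∨
               (-((N : ℝ) - 2) ^ 2 / 4 < lam2 ∧ B0 = 0))) ∨
            (A20 = Aminus N lam2 ∧ B0 = 0 ∧ -(N : ℝ) / 2 < A20))
    (h0 : ℝ → ℝ) (c0 : ℝ) (hc0 : 0 < c0)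
    (hpos : ∀ r : ℝ, 0 < r → 0 < h0 r)
    (hsmooth : ContDiffOn ℝ (m + 2) h0 (Set.Ioi 0))
    (hODE : ∀ r : ℝ, 0 < r →
      deriv (deriv h0) r + ((N : ℝ) - 1) / r * deriv h0 r - V r * h0 r = 0)
    (hzero : Filter.Tendsto (fun r : ℝ => r ^ (-(Aplus N lam1)) * h0 r)
      (nhdsWithin 0 (Set.Ioi 0)) (nhds 1))
    (hinfty : Filter.Tendsto (fun r : ℝ => h0 r / (r ^ A20 * Real.log r ^ B0))
      Filter.atTop (nhds c0)) :
    ∃ C : ℝ, 0 < C ∧ ∀ p σ : ℝ≥0∞, 1 ≤ p → 1 ≤ σ →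
      (p = 1 → σ = 1) → (p = ∞ → σ = ∞) →
      lorentzNormOn N p σ (Metric.ball 0 1) (fun x => h0 ‖x‖) < ∞ →
      ∀ t : ℝ, 0 < t →
        ENNReal.ofReal
            (C * t ^ (if p = ∞ then (0 : ℝ) else (N : ℝ) / (2 * p.toReal))
              * h0 (Real.sqrt t))
          ≤ lorentzNormOn N p σ (Metric.ball 0 (Real.sqrt t)) (fun x => h0 ‖x‖) := by

  classical
  have hNpos : 0 < N := by omega
  have hcont : ContinuousOn h0 (Set.Ioi 0) := hsmooth.continuousOn
  have hB0le : B0 ≤ 1 := by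
    rcases hA20 with ⟨_, (⟨_, hB⟩ | ⟨_, hB⟩)⟩ | ⟨_, hB, _⟩ <;> omega
  obtain ⟨c, hc, hdbl⟩ :=
    doubling h0 (Aplus N lam1) A20 c0 B0 hB0le hc0 hpos hcont hzero hinfty
  have hBfin : volume (Metric.ball (0 : EuclideanSpace ℝ (Fin N)) 1) ≠ ⊤ :=
    measure_ball_lt_top.ne
  have hBpos : 0 < volume (Metric.ball (0 : EuclideanSpace ℝ (Fin N)) 1) :=
    Metric.measure_ball_pos _ _ one_pos
  set b : ℝ := (volume (Metric.ball (0 : EuclideanSpace ℝ (Fin N)) 1)).toReal with hbdef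
  have hbpos : 0 < b := ENNReal.toReal_pos hBpos.ne' hBfin
  set κ : ℝ := (1 - (1/2 : ℝ) ^ N) * b with hκdef
  have hhalf : (1/2 : ℝ) ^ N < 1 := pow_lt_one₀ (by norm_num) (by norm_num) hNpos.ne'
  have hκ : 0 < κ := mul_pos (by linarith) hbpos
  have hminpos : 0 < min (κ/2) 1 := lt_min (by positivity) one_pos
  refine ⟨c/2 * min (κ/2) 1, mul_pos (half_pos hc) hminpos, ?_⟩
  intro p σ hp1 hσ1 _ hpσ _ t ht
  set C : ℝ := c/2 * min (κ/2) 1 with hC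
  set rt : ℝ := Real.sqrt t with hrtdef
  have hrt : 0 < rt := Real.sqrt_pos.mpr ht
  have hh : 0 < h0 rt := hpos _ hrt
  set s0 : ℝ := κ * rt ^ N with hs0def
  have hrtN : (0:ℝ) < rt ^ N := pow_pos hrt N
  have hs0 : 0 < s0 := mul_pos hκ hrtN
  -- annulus volume
  have hvol : volume (Metric.ball (0 : EuclideanSpace ℝ (Fin N)) rt \ Metric.ball 0 (rt/2))
      = ENNReal.ofReal s0 := by
    have hsub : Metric.ball (0 : EuclideanSpace ℝ (Fin N)) (rt/2) ⊆ Metric.ball 0 rt :=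
      Metric.ball_subset_ball (by linarith)
    rw [measure_diff hsub measurableSet_ball.nullMeasurableSet measure_ball_lt_top.ne,
      euclid_ball_vol hNpos hrt.le, euclid_ball_vol hNpos (by positivity : (0:ℝ) ≤ rt/2),
      ← ENNReal.ofReal_toReal hBfin, ← hbdef,
      ← ENNReal.ofReal_mul (by positivity), ← ENNReal.ofReal_mul (by positivity),
      ← ENNReal.ofReal_sub _ (by positivity)]
    congr 1
    have : (rt/2) ^ N = rt ^ N * (1/2 : ℝ) ^ N := by
      rw [div_eq_mul_one_div, mul_pow]
    rw [hs0def, hκdef, this]; ring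
  -- rearrangement lower bound
  have hre : ∀ s : ℝ, 0 < s → s < s0 →
      c * h0 rt ≤ rearr N ((Metric.ball 0 rt).indicator fun x => h0 ‖x‖) s := by
    intro s hs hss
    exact rearr_lb hNpos h0 hpos hcont hc hdbl hrt hs
      (by rw [hvol]; exact (ENNReal.ofReal_lt_ofReal_iff hs0).mpr hss)
  -- power identity
  have hts : rt ^ N = t ^ ((N : ℝ)/2) := by
    rw [← Real.rpow_natCast rt N, hrtdef, Real.sqrt_eq_rpow, ← Real.rpow_mul ht.le]
    congr 1; ring
  -- main case split
  rcases eq_or_ne σ ⊤ with hσtop | hσtop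
  · -- σ = ∞ : supremum case
    subst hσtop
    rw [lorentzNormOn, lorentzNorm]
    simp only [if_pos rfl]
    have hmem : s0/2 ∈ Set.Ioi (0:ℝ) := by simpa using half_pos hs0
    have hsup := le_biSup
      (f := fun s : ℝ => ENNReal.ofReal (s ^ (if p = ⊤ then (0:ℝ) else 1/p.toReal) *
        rearr N ((Metric.ball 0 rt).indicator fun x => h0 ‖x‖) s)) hmem
    refine le_trans ?_ hsup
    apply ENNReal.ofReal_le_ofReal
    have hrearr := hre (s0/2) (half_pos hs0) (by linarith)
    rcases eq_or_ne p ⊤ with hptop | hptop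
    · subst hptop
      simp only [if_pos rfl, eq_self_iff_true, if_true, Real.rpow_zero, one_mul, mul_one]
      have hCc : C ≤ c := by
        rw [hC]; nlinarith [min_le_right (κ/2) (1:ℝ), hminpos, hc]
      calc C * h0 rt ≤ c * h0 rt := mul_le_mul_of_nonneg_right hCc hh.le
        _ ≤ _ := hrearr
    · simp only [if_neg hptop]
      have hptr : 1 ≤ p.toReal := by
        have := ENNReal.toReal_mono hptop hp1
        simpa using this
      set pe : ℝ := 1/p.toReal with hpedef
      have hpe0 : 0 < pe := by
        rw [hpedef]; exact div_pos one_pos (by linarith)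
      have hpe1 : pe ≤ 1 := by
        rw [hpedef]; rw [div_le_one (by linarith)]; exact hptr
      have hs02 : s0/2 = (κ/2) * rt ^ N := by rw [hs0def]; ring
      have hsplit : (s0/2 : ℝ) ^ pe = (κ/2) ^ pe * t ^ ((N:ℝ)/(2*p.toReal)) := by
        rw [hs02, Real.mul_rpow (half_pos hκ).le hrtN.le, hts, ← Real.rpow_mul ht.le]
        congr 1
        rw [hpedef]; ring
      have hκpe : min (κ/2) 1 ≤ (κ/2) ^ pe := rpow_ge_min (half_pos hκ) hpe0.le hpe1
      have htθ : (0:ℝ) < t ^ ((N:ℝ)/(2*p.toReal)) := Real.rpow_pos_of_pos ht _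
      have hsp : (0:ℝ) < (s0/2) ^ pe := Real.rpow_pos_of_pos (half_pos hs0) _
      have step1 : C * t ^ ((N:ℝ)/(2*p.toReal)) * h0 rt ≤ (s0/2) ^ pe * (c * h0 rt) := by
        rw [hsplit]
        have hfac : C ≤ (κ/2) ^ pe * c := by
          rw [hC]; nlinarith [hκpe, hminpos, hc]
        calc C * t ^ ((N:ℝ)/(2*p.toReal)) * h0 rt
            = C * (t ^ ((N:ℝ)/(2*p.toReal)) * h0 rt) := by ring
          _ ≤ ((κ/2) ^ pe * c) * (t ^ ((N:ℝ)/(2*p.toReal)) * h0 rt) :=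
              mul_le_mul_of_nonneg_right hfac (by positivity)
          _ = (κ/2) ^ pe * t ^ ((N:ℝ)/(2*p.toReal)) * (c * h0 rt) := by ring
      calc C * t ^ ((N:ℝ)/(2*p.toReal)) * h0 rt
          ≤ (s0/2) ^ pe * (c * h0 rt) := step1
        _ ≤ (s0/2) ^ pe * rearr N ((Metric.ball 0 rt).indicator fun x => h0 ‖x‖) (s0/2) :=
            mul_le_mul_of_nonneg_left hrearr hsp.le
  · -- σ < ∞ : integral case
    have hptop : p ≠ ⊤ := fun h => hσtop (hpσ h)
    rw [lorentzNormOn, lorentzNorm]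
    simp only [if_neg hσtop, if_neg hptop]
    have hptr : 1 ≤ p.toReal := by
      have := ENNReal.toReal_mono hptop hp1
      simpa using this
    have hσr : 1 ≤ σ.toReal := by
      have := ENNReal.toReal_mono hσtop hσ1
      simpa using this
    have hσr0 : 0 < σ.toReal := by linarith
    set pe : ℝ := 1/p.toReal with hpedef
    have hpe0 : 0 < pe := by
      rw [hpedef]; exact div_pos one_pos (by linarith)
    have hpe1 : pe ≤ 1 := by
      rw [hpedef, div_le_one (by linarith)]; exact hptr
    set a : ℝ := pe * σ.toReal with hadef
    have ha0 : 0 < a := mul_pos hpe0 hσr0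
    have haσ : a ≤ σ.toReal := by
      rw [hadef]; nlinarith [hpe1, hσr0]
    set φ : EuclideanSpace ℝ (Fin N) → ℝ := (Metric.ball 0 rt).indicator fun x => h0 ‖x‖
      with hφdef
    set Y : ℝ := (s0 ^ a / a) ^ (1/σ.toReal) * (c * h0 rt) with hYdef
    have hY0 : 0 ≤ Y := by
      rw [hYdef]
      have h1 : (0:ℝ) ≤ (s0 ^ a / a) ^ (1/σ.toReal) :=
        Real.rpow_nonneg (div_nonneg (Real.rpow_nonneg hs0.le _) ha0.le) _
      exact mul_nonneg h1 (mul_nonneg hc.le hh.le)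
    -- pointwise bound on the integrand
    have hpoint : ∀ s ∈ Set.Ioo (0:ℝ) s0,
        ENNReal.ofReal (s ^ (a-1)) * ENNReal.ofReal ((c * h0 rt) ^ σ.toReal) ≤
        ENNReal.ofReal ((s ^ pe * rearr N φ s) ^ σ.toReal / s) := by
      intro s hs
      rw [← ENNReal.ofReal_mul (Real.rpow_nonneg hs.1.le _)]
      apply ENNReal.ofReal_le_ofReal
      have hspe : (0:ℝ) < s ^ pe := Real.rpow_pos_of_pos hs.1 _
      have hrearr := hre s hs.1 hs.2
      have h1 : (s ^ pe * (c * h0 rt)) ^ σ.toReal ≤ (s ^ pe * rearr N φ s) ^ σ.toReal := by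
        apply Real.rpow_le_rpow (mul_nonneg hspe.le (mul_nonneg hc.le hh.le))
          (mul_le_mul_of_nonneg_left hrearr hspe.le) hσr0.le
      have h2 : (s ^ pe * (c * h0 rt)) ^ σ.toReal
          = s ^ a * (c * h0 rt) ^ σ.toReal := by
        rw [Real.mul_rpow hspe.le (mul_nonneg hc.le hh.le), hadef,
          Real.rpow_mul hs.1.le]
      have h3 : s ^ (a-1) * (c * h0 rt) ^ σ.toReal
          = s ^ a * (c * h0 rt) ^ σ.toReal / s := by
        rw [Real.rpow_sub hs.1, Real.rpow_one]; ring
      rw [h3]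
      rw [h2] at h1
      exact div_le_div_of_nonneg_right h1 hs.1.le
    -- measurability
    have hmeas : Measurable fun s : ℝ => ENNReal.ofReal (s ^ (a-1)) :=
      (measurable_id.pow_const (a-1) |>.ennreal_ofReal)
    -- lower bound for the whole lintegral
    have hstep2 : ENNReal.ofReal (s0 ^ a / a * (c * h0 rt) ^ σ.toReal) ≤
        ∫⁻ s in Set.Ioi (0:ℝ),
          ENNReal.ofReal ((s ^ pe * rearr N φ s) ^ σ.toReal / s) := by
      rw [ENNReal.ofReal_mul (div_nonneg (Real.rpow_nonneg hs0.le _) ha0.le)]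
      calc ENNReal.ofReal (s0 ^ a / a) * ENNReal.ofReal ((c * h0 rt) ^ σ.toReal)
          ≤ (∫⁻ s in Set.Ioo (0:ℝ) s0, ENNReal.ofReal (s ^ (a-1))) *
            ENNReal.ofReal ((c * h0 rt) ^ σ.toReal) :=
            mul_le_mul_left (lint_rpow ha0 hs0) _
        _ = ∫⁻ s in Set.Ioo (0:ℝ) s0, ENNReal.ofReal (s ^ (a-1)) *
            ENNReal.ofReal ((c * h0 rt) ^ σ.toReal) :=
            (lintegral_mul_const _ hmeas).symm
        _ ≤ ∫⁻ s in Set.Ioo (0:ℝ) s0,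
            ENNReal.ofReal ((s ^ pe * rearr N φ s) ^ σ.toReal / s) := by
            apply lintegral_mono_ae
            filter_upwards [ae_restrict_mem measurableSet_Ioo] with s hsmem
            exact hpoint s hsmem
        _ ≤ ∫⁻ s in Set.Ioi (0:ℝ),
            ENNReal.ofReal ((s ^ pe * rearr N φ s) ^ σ.toReal / s) :=
            lintegral_mono_set (fun x hx => hx.1)
    -- rpow manipulation
    have hYpow : Y ^ σ.toReal = s0 ^ a / a * (c * h0 rt) ^ σ.toReal := by
      rw [hYdef, Real.mul_rpow
        (Real.rpow_nonneg (div_nonneg (Real.rpow_nonneg hs0.le _) ha0.le) _)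
        (mul_nonneg hc.le hh.le),
        ← Real.rpow_mul (div_nonneg (Real.rpow_nonneg hs0.le _) ha0.le),
        one_div_mul_cancel hσr0.ne', Real.rpow_one]
    have hYσ : ENNReal.ofReal Y ^ σ.toReal ≤
        ∫⁻ s in Set.Ioi (0:ℝ),
          ENNReal.ofReal ((s ^ pe * rearr N φ s) ^ σ.toReal / s) := by
      rw [ENNReal.ofReal_rpow_of_nonneg hY0 hσr0.le, hYpow]
      exact hstep2

    -- the real-number inequality
    have hexp : (s0 ^ a) ^ (1/σ.toReal) = s0 ^ pe := by
      rw [← Real.rpow_mul hs0.le, hadef]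
      congr 1
      field_simp
    have ha2 : a ^ (1/σ.toReal) ≤ 2 := rpow_inv_le_two ha0 hσr haσ
    have ha2' : (0:ℝ) < a ^ (1/σ.toReal) := Real.rpow_pos_of_pos ha0 _
    have e1 : s0 ^ pe / 2 ≤ (s0 ^ a / a) ^ (1/σ.toReal) := by
      rw [Real.div_rpow (Real.rpow_nonneg hs0.le _) ha0.le, hexp]
      gcongr
    have hsplit : s0 ^ pe = κ ^ pe * t ^ ((N:ℝ)/(2*p.toReal)) := by
      rw [hs0def, Real.mul_rpow hκ.le hrtN.le, hts, ← Real.rpow_mul ht.le]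
      congr 1
      rw [hpedef]; ring
    have hκpe : min (κ/2) 1 ≤ κ ^ pe := by
      have h1 : min κ 1 ≤ κ ^ pe := rpow_ge_min hκ hpe0.le hpe1
      have h2 : min (κ/2) 1 ≤ min κ 1 := min_le_min (by linarith) le_rfl
      linarith
    have htθ : (0:ℝ) < t ^ ((N:ℝ)/(2*p.toReal)) := Real.rpow_pos_of_pos ht _
    have hreal : C * t ^ ((N:ℝ)/(2*p.toReal)) * h0 rt ≤ Y := by
      rw [hYdef]
      calc C * t ^ ((N:ℝ)/(2*p.toReal)) * h0 rt
          = (min (κ/2) 1 * t ^ ((N:ℝ)/(2*p.toReal)) / 2) * (c * h0 rt) := by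
            rw [hC]; ring
        _ ≤ (s0 ^ pe / 2) * (c * h0 rt) := by
            apply mul_le_mul_of_nonneg_right _ (mul_nonneg hc.le hh.le)
            rw [hsplit]
            apply div_le_div_of_nonneg_right _ (by norm_num)
            exact mul_le_mul_of_nonneg_right hκpe htθ.le
        _ ≤ (s0 ^ a / a) ^ (1/σ.toReal) * (c * h0 rt) :=
            mul_le_mul_of_nonneg_right e1 (mul_nonneg hc.le hh.le)
    -- conclude
    calc ENNReal.ofReal (C * t ^ ((N:ℝ)/(2*p.toReal)) * h0 rt)
        ≤ ENNReal.ofReal Y := ENNReal.ofReal_le_ofReal hreal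
      _ = (ENNReal.ofReal Y ^ σ.toReal) ^ (1/σ.toReal) := by
          rw [← ENNReal.rpow_mul, mul_one_div, div_self hσr0.ne', ENNReal.rpow_one]
      _ ≤ (∫⁻ s in Set.Ioi (0:ℝ),
            ENNReal.ofReal ((s ^ pe * rearr N φ s) ^ σ.toReal / s)) ^ (1/σ.toReal) :=
          ENNReal.rpow_le_rpow hYσ (by positivity)
end

section
/- Let N ≥ 2 be an integer, W : (0,∞) → ℝ continuous, and h : (0,∞) → (0,∞) a twice continuously differentiable function with h''(r) + ((N−1)/r)·h'(r) − W(r)·h(r) = 0 for all r > 0, and suppose there exist A > −N/2 and c ≥ 1 with c^{−1} r^A ≤ h(r) ≤ c r^A for 0 < r ≤ 1. Then for every continuous function f : (0,∞) → ℝ that is bounded on (0,1], the quantity u(r) := ∫₀^r s^{1−N} h(s)^{−2} (∫₀^s τ^{N−1} h(τ)² f(τ) dτ) ds is well defined (all integrals converge absolutely) for every r > 0, u is twice continuously differentiable on (0,∞), u''(r) + ((N−1)/r)·u'(r) + 2(h'(r)/h(r))·u'(r) = f(r) for all r > 0 (equivalently, (r^{N−1} h(r)² u'(r))' = r^{N−1}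 h(r)² f(r)), and lim_{r→0+} u(r) = 0 and lim_{r→0+} u'(r) = 0. -/
open MeasureTheory Set

lemma aux_split (g : ℝ → ℝ) {a b : ℝ} (h0a : 0 < a) (hab : a ≤ b)
    (h1 : IntegrableOn g (Ioc 0 a)) (h2 : IntegrableOn g (Ioc a b)) :
    ∫ t in Ioc 0 b, g t = (∫ t in Ioc 0 a, g t) + ∫ t in Ioc a b, g t := by
  rw [← Ioc_union_Ioc_eq_Ioc h0a.le hab,
    setIntegral_union (Ioc_disjoint_Ioc_of_le le_rfl) measurableSet_Ioc h1 h2]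

lemma aux_FTC (g : ℝ → ℝ) (hg : ContinuousOn g (Set.Ioi 0))
    (hint : ∀ r : ℝ, 0 < r → IntegrableOn g (Set.Ioc 0 r))
    (r : ℝ) (hr : 0 < r) :
    HasDerivAt (fun s => ∫ t in Ioc (0:ℝ) s, g t) (g r) r := by
  set a := r / 2 with ha
  have h0a : 0 < a := by positivity
  have har : a < r := by simp [ha]; linarith
  have hii : IntervalIntegrable g volume a r := by
    rw [intervalIntegrable_iff_integrableOn_Ioc_of_le har.le]
    exact (hint r hr).mono_set (Ioc_subset_Ioc h0a.le le_rfl)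
  have hmeas : StronglyMeasurableAtFilter g (nhds r) volume :=
    hg.stronglyMeasurableAtFilter isOpen_Ioi r hr
  have hca : ContinuousAt g r := hg.continuousAt (Ioi_mem_nhds hr)
  have H : HasDerivAt (fun s => (∫ t in Ioc (0:ℝ) a, g t) + ∫ t in a..s, g t) (g r) r :=
    (intervalIntegral.integral_hasDerivAt_right hii hmeas hca).const_add _
  refine H.congr_of_eventuallyEq ?_
  filter_upwards [Ioi_mem_nhds har] with s hs
  have hs' : a ≤ s := le_of_lt hs
  rw [intervalIntegral.integral_of_le hs']
  refine aux_split g h0a hs' (hint a h0a) ?_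
  rcases le_or_gt s a with hsa | hsa
  · simp [Ioc_eq_empty (not_lt.mpr hsa)]
  · exact (hint s (h0a.trans hsa)).mono_set (Ioc_subset_Ioc h0a.le le_rfl)

lemma aux_rpow_intOn {C p : ℝ} (hp : -1 < p) {m : ℝ} (hm : 0 ≤ m) :
    IntegrableOn (fun s : ℝ => C * s ^ p) (Ioc 0 m) := by
  have := (intervalIntegral.intervalIntegrable_rpow' (a := 0) (b := m) hp).const_mul C
  rwa [intervalIntegrable_iff_integrableOn_Ioc_of_le hm] at this

lemma aux_integrable (g : ℝ → ℝ) (hg : ContinuousOn g (Ioi 0))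
    (C p : ℝ) (hp : -1 < p) (hbd : ∀ s ∈ Ioc (0:ℝ) 1, |g s| ≤ C * s ^ p)
    (r : ℝ) (hr : 0 < r) : IntegrableOn g (Ioc 0 r) := by
  set m := min r 1 with hmdef
  have hm0 : 0 < m := lt_min hr one_pos
  have hm1 : m ≤ 1 := min_le_right _ _
  have hmr : m ≤ r := min_le_left _ _
  have h1 : IntegrableOn g (Ioc 0 m) := by
    refine Integrable.mono' (aux_rpow_intOn (C := C) hp hm0.le)
      ((hg.mono (Ioc_subset_Ioi_self)).aestronglyMeasurable measurableSet_Ioc) ?_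
    filter_upwards [ae_restrict_mem measurableSet_Ioc] with s hs
    exact (Real.norm_eq_abs _ ▸ hbd s ⟨hs.1, hs.2.trans hm1⟩)
  have h2 : IntegrableOn g (Ioc m r) := by
    have : IntegrableOn g (Icc m r) :=
      (hg.mono (fun x hx => lt_of_lt_of_le hm0 hx.1)).integrableOn_Icc
    exact this.mono_set Ioc_subset_Icc_self
  have := h1.union h2
  rwa [Ioc_union_Ioc_eq_Ioc hm0.le hmr] at this

lemma aux_intbound (g : ℝ → ℝ) (hg : ContinuousOn g (Ioi 0))
    (C p : ℝ) (hp : -1 < p) (hbd : ∀ s ∈ Ioc (0:ℝ) 1, |g s| ≤ C * s ^ p)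
    (s : ℝ) (hs : 0 < s) (hs1 : s ≤ 1) :
    |∫ t in Ioc (0:ℝ) s, g t| ≤ C / (p + 1) * s ^ (p + 1) := by
  have hint := aux_integrable g hg C p hp hbd s hs
  have hval : ∫ t in Ioc (0:ℝ) s, C * t ^ p = C / (p + 1) * s ^ (p + 1) := by
    rw [← intervalIntegral.integral_of_le hs.le, intervalIntegral.integral_const_mul,
      integral_rpow (Or.inl hp), Real.zero_rpow (by linarith)]
    ring
  calc |∫ t in Ioc (0:ℝ) s, g t| ≤ ∫ t in Ioc (0:ℝ) s, |g t| := by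
        simpa using norm_integral_le_integral_norm (μ := volume.restrict (Ioc 0 s)) g
    _ ≤ ∫ t in Ioc (0:ℝ) s, C * t ^ p := by
        refine setIntegral_mono_on hint.abs (aux_rpow_intOn hp hs.le) measurableSet_Ioc ?_
        exact fun t ht => hbd t ⟨ht.1, ht.2.trans hs1⟩
    _ = C / (p + 1) * s ^ (p + 1) := hval

lemma aux_rpow_cont (e : ℝ) : ContinuousOn (fun x : ℝ => x ^ e) (Ioi 0) :=
  fun x hx => (Real.continuousAt_rpow_const x e (Or.inl (ne_of_gt hx))).continuousWithinAt

/-- variation-of-parameters for the weighted operator associated with a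
positive solution `h` of `h'' + (N-1)/r · h' - W h = 0` comparable to `r^A` near `0`
with `A > -N/2`: for bounded continuous `f`, the function
`u(r) = ∫₀^r s^{1-N} h(s)⁻² (∫₀^s τ^{N-1} h(τ)² f(τ) dτ) ds` is well defined, is `C²`
on `(0,∞)`, satisfies `u'' + (N-1)/r · u' + 2 (h'/h) u' = f`, and `u, u' → 0` at `0⁺`. -/
theorem stmt_12
    (N : ℕ) (hN : 2 ≤ N)
    (W : ℝ → ℝ) (hW : ContinuousOn W (Set.Ioi 0))
    (h : ℝ → ℝ) (hpos : ∀ r : ℝ, 0 < r → 0 < h r)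
    (hsmooth : ContDiffOn ℝ 2 h (Set.Ioi 0))
    (hODE : ∀ r : ℝ, 0 < r →
      deriv (deriv h) r + ((N : ℝ) - 1) / r * deriv h r - W r * h r = 0)
    (A cc : ℝ) (hA : -(N : ℝ) / 2 < A) (hcc : 1 ≤ cc)
    (hcomp : ∀ r : ℝ, 0 < r → r ≤ 1 → cc⁻¹ * r ^ A ≤ h r ∧ h r ≤ cc * r ^ A)
    (f : ℝ → ℝ) (hf : ContinuousOn f (Set.Ioi 0))
    (hfbdd : ∃ M : ℝ, ∀ r : ℝ, 0 < r → r ≤ 1 → |f r| ≤ M) :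
    (∀ r : ℝ, 0 < r →
      IntegrableOn (fun τ : ℝ => τ ^ ((N : ℝ) - 1) * h τ ^ 2 * f τ) (Set.Ioc 0 r) ∧
      IntegrableOn (fun s : ℝ => s ^ (1 - (N : ℝ)) / h s ^ 2 *
        ∫ τ in Set.Ioc (0 : ℝ) s, τ ^ ((N : ℝ) - 1) * h τ ^ 2 * f τ) (Set.Ioc 0 r)) ∧
    ContDiffOn ℝ 2
      (fun r : ℝ => ∫ s in Set.Ioc (0 : ℝ) r, s ^ (1 - (N : ℝ)) / h s ^ 2 *
        ∫ τ in Set.Ioc (0 : ℝ) s, τ ^ ((N : ℝ) - 1) * h τ ^ 2 * f τ) (Set.Ioi 0) ∧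
    (∀ r : ℝ, 0 < r →
      deriv (deriv (fun r : ℝ => ∫ s in Set.Ioc (0 : ℝ) r, s ^ (1 - (N : ℝ)) / h s ^ 2 *
          ∫ τ in Set.Ioc (0 : ℝ) s, τ ^ ((N : ℝ) - 1) * h τ ^ 2 * f τ)) r
        + ((N : ℝ) - 1) / r *
          deriv (fun r : ℝ => ∫ s in Set.Ioc (0 : ℝ) r, s ^ (1 - (N : ℝ)) / h s ^ 2 *
            ∫ τ in Set.Ioc (0 : ℝ) s, τ ^ ((N : ℝ) - 1) * h τ ^ 2 * f τ) r
        + 2 * (deriv h r / h r) *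
          deriv (fun r : ℝ => ∫ s in Set.Ioc (0 : ℝ) r, s ^ (1 - (N : ℝ)) / h s ^ 2 *
            ∫ τ in Set.Ioc (0 : ℝ) s, τ ^ ((N : ℝ) - 1) * h τ ^ 2 * f τ) r
        = f r) ∧
    Filter.Tendsto
      (fun r : ℝ => ∫ s in Set.Ioc (0 : ℝ) r, s ^ (1 - (N : ℝ)) / h s ^ 2 *
        ∫ τ in Set.Ioc (0 : ℝ) s, τ ^ ((N : ℝ) - 1) * h τ ^ 2 * f τ)
      (nhdsWithin 0 (Set.Ioi 0)) (nhds 0) ∧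
    Filter.Tendsto
      (deriv (fun r : ℝ => ∫ s in Set.Ioc (0 : ℝ) r, s ^ (1 - (N : ℝ)) / h s ^ 2 *
        ∫ τ in Set.Ioc (0 : ℝ) s, τ ^ ((N : ℝ) - 1) * h τ ^ 2 * f τ))
      (nhdsWithin 0 (Set.Ioi 0)) (nhds 0) := by
  obtain ⟨M₀, hM₀⟩ := hfbdd
  set M := max M₀ 0 with hM_def
  have hM0 : 0 ≤ M := le_max_right _ _
  have hM : ∀ r : ℝ, 0 < r → r ≤ 1 → |f r| ≤ M := fun r hr hr1 =>
    (hM₀ r hr hr1).trans (le_max_left _ _)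
  have hNR : (2:ℝ) ≤ (N:ℝ) := by exact_mod_cast hN
  -- notation
  set G : ℝ → ℝ := fun τ => τ ^ ((N : ℝ) - 1) * h τ ^ 2 * f τ with hG_def
  set Iv : ℝ → ℝ := fun s => ∫ τ in Ioc (0:ℝ) s, G τ with hIv_def
  set F : ℝ → ℝ := fun s => s ^ (1 - (N : ℝ)) / h s ^ 2 * Iv s with hF_def
  set u : ℝ → ℝ := fun r => ∫ s in Ioc (0:ℝ) r, F s with hu_def
  have hcont_h : ContinuousOn h (Ioi 0) := hsmooth.continuousOn
  have hcont_h' : ContinuousOn (deriv h) (Ioi 0) := by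
    have := (contDiffOn_succ_iff_deriv_of_isOpen (n := 1) isOpen_Ioi).mp
      (by exact_mod_cast hsmooth)
    exact this.2.2.continuousOn
  have hdiff_h : ∀ r : ℝ, 0 < r → HasDerivAt h (deriv h r) r := fun r hr =>
    ((hsmooth.contDiffAt (Ioi_mem_nhds hr)).differentiableAt (by norm_num)).hasDerivAt
  -- G : continuity and bound
  have hG_cont : ContinuousOn G (Ioi 0) :=
    ((aux_rpow_cont _).mul (hcont_h.pow 2)).mul hf
  set p : ℝ := ((N:ℝ) - 1) + A * 2 with hp_def
  have hp : -1 < p := by rw [hp_def]; linarith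
  set C1 : ℝ := M * cc ^ 2 with hC1_def
  have hrpow_two : ∀ x : ℝ, 0 < x → (x ^ A) ^ 2 = x ^ (A * 2) := by
    intro x hx
    rw [← Real.rpow_natCast (x ^ A) 2, ← Real.rpow_mul hx.le]
    norm_num
  have hG_bd : ∀ τ ∈ Ioc (0:ℝ) 1, |G τ| ≤ C1 * τ ^ p := by
    rintro τ ⟨hτ, hτ1⟩
    have hhτ := hpos τ hτ
    have hc := hcomp τ hτ hτ1
    have h1 : |G τ| = τ ^ ((N:ℝ)-1) * h τ ^ 2 * |f τ| := by
      rw [hG_def]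
      simp only [abs_mul, abs_of_nonneg (Real.rpow_nonneg hτ.le _), abs_of_nonneg (sq_nonneg (h τ))]
    have h2 : h τ ^ 2 ≤ cc ^ 2 * τ ^ (A * 2) := by
      have := pow_le_pow_left₀ hhτ.le hc.2 2
      rwa [mul_pow, hrpow_two τ hτ] at this
    have h3 : τ ^ ((N:ℝ)-1) * τ ^ (A*2) = τ ^ p := by
      rw [← Real.rpow_add hτ, hp_def]
    rw [h1]
    calc τ ^ ((N:ℝ)-1) * h τ ^ 2 * |f τ|
        ≤ τ ^ ((N:ℝ)-1) * (cc ^ 2 * τ ^ (A*2)) * M := by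
          apply mul_le_mul (mul_le_mul_of_nonneg_left h2 (Real.rpow_nonneg hτ.le _))
            (hM τ hτ hτ1) (abs_nonneg _)
          positivity
      _ = C1 * τ ^ p := by rw [← h3, hC1_def]; ring
  have hG_int : ∀ r : ℝ, 0 < r → IntegrableOn G (Ioc 0 r) :=
    aux_integrable G hG_cont C1 p hp hG_bd
  -- Iv : continuity, derivative, bound
  have hIv_deriv : ∀ r : ℝ, 0 < r → HasDerivAt Iv (G r) r := fun r hr =>
    aux_FTC G hG_cont hG_int r hr
  have hIv_cont : ContinuousOn Iv (Ioi 0) := fun s hs =>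
    ((hIv_deriv s hs).continuousAt).continuousWithinAt
  set C2 : ℝ := C1 / (p+1) with hC2_def
  have hC2 : 0 ≤ C2 := by
    apply div_nonneg (by positivity); linarith
  have hIv_bd : ∀ s : ℝ, 0 < s → s ≤ 1 → |Iv s| ≤ C2 * s ^ (p+1) := fun s hs hs1 =>
    aux_intbound G hG_cont C1 p hp hG_bd s hs hs1
  -- F : continuity and bound
  have hF_cont : ContinuousOn F (Ioi 0) := by
    refine ContinuousOn.mul (ContinuousOn.div (aux_rpow_cont _) (hcont_h.pow 2) ?_) hIv_cont
    exact fun s hs => pow_ne_zero 2 (hpos s hs).ne'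
  set C3 : ℝ := cc ^ 2 * C2 with hC3_def
  have hccpos : (0:ℝ) < cc := lt_of_lt_of_le one_pos hcc
  have hF_bd : ∀ s ∈ Ioc (0:ℝ) 1, |F s| ≤ C3 * s ^ (1:ℝ) := by
    rintro s ⟨hs, hs1⟩
    have hhs := hpos s hs
    have hc := hcomp s hs hs1
    have hsA : 0 < s ^ (A*2) := Real.rpow_pos_of_pos hs _
    have h2 : cc⁻¹ ^ 2 * s ^ (A*2) ≤ h s ^ 2 := by
      have h0 : 0 ≤ cc⁻¹ * s ^ A := by positivity
      have := pow_le_pow_left₀ h0 hc.1 2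
      rwa [mul_pow, hrpow_two s hs] at this
    have h4 : (h s ^ 2)⁻¹ ≤ cc ^ 2 / s ^ (A*2) := by
      have := inv_anti₀ (by positivity : (0:ℝ) < cc⁻¹ ^ 2 * s ^ (A*2)) h2
      calc (h s ^ 2)⁻¹ ≤ (cc⁻¹ ^ 2 * s ^ (A*2))⁻¹ := this
        _ = cc ^ 2 / s ^ (A*2) := by
            rw [mul_inv, inv_pow, inv_inv, div_eq_mul_inv]
    have hexp : s ^ (1 - (N:ℝ)) * s ^ (p+1) / s ^ (A*2) = s ^ (1:ℝ) := by
      rw [← Real.rpow_add hs, ← Real.rpow_sub hs]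
      congr 1
      rw [hp_def]; ring
    have h1 : |F s| = s ^ (1-(N:ℝ)) / h s ^ 2 * |Iv s| := by
      rw [hF_def, abs_mul,
        abs_of_nonneg (div_nonneg (Real.rpow_nonneg hs.le _) (sq_nonneg _))]
    rw [h1]
    calc s ^ (1-(N:ℝ)) / h s ^ 2 * |Iv s|
        ≤ s ^ (1-(N:ℝ)) * (cc ^ 2 / s ^ (A*2)) * (C2 * s ^ (p+1)) := by
          apply mul_le_mul ?_ (hIv_bd s hs hs1) (abs_nonneg _) (by positivity)
          rw [div_eq_mul_inv]
          exact mul_le_mul_of_nonneg_left h4 (Real.rpow_nonneg hs.le _)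
      _ = C3 * s ^ (1:ℝ) := by rw [← hexp, hC3_def]; ring
  have hF_int : ∀ r : ℝ, 0 < r → IntegrableOn F (Ioc 0 r) :=
    aux_integrable F hF_cont C3 1 (by norm_num) hF_bd
  -- u' = F
  have hu_deriv : ∀ r : ℝ, 0 < r → HasDerivAt u (F r) r := fun r hr =>
    aux_FTC F hF_cont hF_int r hr
  have hu_deriv_eq : ∀ r : ℝ, 0 < r → deriv u r = F r := fun r hr =>
    (hu_deriv r hr).deriv
  -- F' : derivative of F
  have hq_ne : ∀ r : ℝ, 0 < r → h r ^ 2 ≠ 0 := fun r hr => pow_ne_zero 2 (hpos r hr).ne'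
  set F' : ℝ → ℝ := fun r =>
    ((1 - (N:ℝ)) * r ^ (1 - (N:ℝ) - 1) * h r ^ 2 -
      r ^ (1-(N:ℝ)) * (2 * h r ^ 1 * deriv h r)) / (h r ^ 2) ^ 2 * Iv r
    + r ^ (1 - (N:ℝ)) / h r ^ 2 * G r with hF'_def
  have hF_deriv : ∀ r : ℝ, 0 < r → HasDerivAt F (F' r) r := by
    intro r hr
    have hq : HasDerivAt (fun s : ℝ => s ^ (1 - (N:ℝ)) / h s ^ 2)
        (((1 - (N:ℝ)) * r ^ (1 - (N:ℝ) - 1) * h r ^ 2 -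
          r ^ (1-(N:ℝ)) * (2 * h r ^ 1 * deriv h r)) / (h r ^ 2) ^ 2) r := by
      exact (Real.hasDerivAt_rpow_const (Or.inl hr.ne')).div
        ((hdiff_h r hr).pow 2) (hq_ne r hr)
    exact hq.mul (hIv_deriv r hr)
  have hF_deriv_eq : ∀ r : ℝ, 0 < r → deriv F r = F' r := fun r hr =>
    (hF_deriv r hr).deriv
  -- key identities
  have hqG : ∀ r : ℝ, 0 < r → r ^ (1 - (N:ℝ)) / h r ^ 2 * G r = f r := by
    intro r hr
    have h1 : r ^ (1 - (N:ℝ)) * r ^ ((N:ℝ)-1) = 1 := by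
      rw [← Real.rpow_add hr]; norm_num
    have hh : h r ≠ 0 := (hpos r hr).ne'
    rw [hG_def]
    field_simp
    linear_combination f r * h1
  -- conclusions
  refine ⟨fun r hr => ⟨hG_int r hr, hF_int r hr⟩, ?_, ?_, ?_, ?_⟩
  · -- C²
    rw [show (2 : WithTop ℕ∞) = 1 + 1 from rfl]
    rw [contDiffOn_succ_iff_deriv_of_isOpen isOpen_Ioi]
    refine ⟨fun r hr => (hu_deriv r hr).differentiableAt.differentiableWithinAt,
      fun hh => absurd hh (by norm_num), ?_⟩
    have : ContDiffOn ℝ 1 F (Ioi 0) := by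
      rw [show (1 : WithTop ℕ∞) = 0 + 1 from rfl]
      rw [contDiffOn_succ_iff_deriv_of_isOpen isOpen_Ioi]
      refine ⟨fun r hr => (hF_deriv r hr).differentiableAt.differentiableWithinAt,
        fun hh => absurd hh (by norm_num), ?_⟩
      rw [contDiffOn_zero]
      have hF'_cont : ContinuousOn F' (Ioi 0) := by
        refine ContinuousOn.add (ContinuousOn.mul (ContinuousOn.div
          (ContinuousOn.sub (((continuousOn_const.mul (aux_rpow_cont _)).mul (hcont_h.pow 2)))
            ((aux_rpow_cont _).mul ((continuousOn_const.mul (hcont_h.pow 1)).mul hcont_h')))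
          ((hcont_h.pow 2).pow 2) (fun r hr => pow_ne_zero 2 (hq_ne r hr))) hIv_cont)
          (ContinuousOn.mul (ContinuousOn.div (aux_rpow_cont _) (hcont_h.pow 2) hq_ne) hG_cont)
      exact hF'_cont.congr hF_deriv_eq
    exact this.congr hu_deriv_eq
  · -- ODE
    intro r hr
    have hmem : Ioi (0:ℝ) ∈ nhds r := Ioi_mem_nhds hr
    have hev : deriv u =ᶠ[nhds r] F := by
      filter_upwards [hmem] with s hs using hu_deriv_eq s hs
    have h2nd : deriv (deriv u) r = F' r := by
      rw [hev.deriv_eq]; exact hF_deriv_eq r hr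
    rw [h2nd, hu_deriv_eq r hr]
    have hkey : ((1 - (N:ℝ)) * r ^ (1 - (N:ℝ) - 1) * h r ^ 2 -
        r ^ (1-(N:ℝ)) * (2 * h r ^ 1 * deriv h r)) / (h r ^ 2) ^ 2
        = -((((N:ℝ)-1)/r + 2 * (deriv h r / h r)) * (r ^ (1-(N:ℝ)) / h r ^ 2)) := by
      have h2 : r ^ (1 - (N:ℝ) - 1) = r ^ (1-(N:ℝ)) / r := by
        rw [Real.rpow_sub hr, Real.rpow_one]
      rw [h2]
      have := hpos r hr
      field_simp
      ring
    rw [hF'_def]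
    simp only
    rw [hqG r hr, hkey, hF_def]
    simp only
    ring
  · -- u → 0
    have hbd : ∀ᶠ r in nhdsWithin (0:ℝ) (Ioi 0), |u r| ≤ C3 / (1+1) * r ^ ((1:ℝ)+1) := by
      filter_upwards [Ioc_mem_nhdsGT_of_mem (Set.mem_Ico.mpr ⟨le_refl 0, one_pos⟩)]
        with r hr
      exact aux_intbound F hF_cont C3 1 (by norm_num) hF_bd r hr.1 hr.2
    have hlim : Filter.Tendsto (fun r : ℝ => C3 / (1+1) * r ^ ((1:ℝ)+1))
        (nhdsWithin 0 (Ioi 0)) (nhds 0) := by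
      have : Filter.Tendsto (fun r : ℝ => C3 / (1+1) * r ^ ((1:ℝ)+1)) (nhds 0) (nhds 0) := by
        have hc : ContinuousAt (fun r : ℝ => C3 / (1+1) * r ^ ((1:ℝ)+1)) 0 :=
          (Real.continuousAt_rpow_const 0 _ (Or.inr (by norm_num))).const_smul (C3/(1+1))
        have h0 : C3 / (1+1) * (0:ℝ) ^ ((1:ℝ)+1) = 0 := by
          rw [Real.zero_rpow (by norm_num)]; ring
        simpa [ContinuousAt, h0] using hc
      exact this.mono_left nhdsWithin_le_nhds
    exact squeeze_zero_norm' (by simpa [Real.norm_eq_abs] using hbd) hlim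
  · -- u' → 0
    have hev : deriv u =ᶠ[nhdsWithin (0:ℝ) (Ioi 0)] F := by
      filter_upwards [self_mem_nhdsWithin] with r hr using hu_deriv_eq r hr
    refine Filter.Tendsto.congr' hev.symm ?_
    have hbd : ∀ᶠ r in nhdsWithin (0:ℝ) (Ioi 0), |F r| ≤ C3 * r ^ (1:ℝ) := by
      filter_upwards [Ioc_mem_nhdsGT_of_mem (Set.mem_Ico.mpr ⟨le_refl 0, one_pos⟩)]
        with r hr using hF_bd r hr
    have hlim : Filter.Tendsto (fun r : ℝ => C3 * r ^ (1:ℝ))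
        (nhdsWithin 0 (Ioi 0)) (nhds 0) := by
      have : Filter.Tendsto (fun r : ℝ => C3 * r ^ (1:ℝ)) (nhds 0) (nhds 0) := by
        have hc : ContinuousAt (fun r : ℝ => C3 * r ^ (1:ℝ)) 0 :=
          (Real.continuousAt_rpow_const 0 _ (Or.inr (by norm_num))).const_smul C3
        have h0 : C3 * (0:ℝ) ^ ((1:ℝ)) = 0 := by
          rw [Real.zero_rpow (by norm_num)]; ring
        simpa [ContinuousAt, h0] using hc
      exact this.mono_left nhdsWithin_le_nhds
    exact squeeze_zero_norm' (by simpa [Real.norm_eq_abs] using hbd) hlim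
end

section
/- Let N ≥ 1 and ℓ ≥ 1 be integers. There exists a constant C > 0, depending only on N and ℓ, such that for every ℓ-times continuously differentiable function g : (0,∞) → ℝ and every x ∈ ℝ^N with x ≠ 0, the ℓ-th iterated Fréchet derivative of the radial function x ↦ g(|x|) at x satisfies ‖D^ℓ(g∘|·|)(x)‖ ≤ C · Σ_{j=1}^{ℓ} |g^{(j)}(|x|)| · |x|^{j−ℓ}, where g^{(j)} denotes the j-th derivative of g and |x| is the Euclidean norm. -/
open Set

private lemma iterDW_isOpen {f : ℝ → ℝ} {s : Set ℝ} (hs : IsOpen s) {x : ℝ}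
    (hx : x ∈ s) (n : ℕ) : iteratedDerivWithin n f s x = iteratedDeriv n f x := by
  rw [iteratedDerivWithin_eq_iteratedFDerivWithin, iteratedDeriv_eq_iteratedFDeriv,
    iteratedFDerivWithin_of_isOpen n hs hx]

private lemma iterD_sub_const (g : ℝ → ℝ) (c : ℝ) {j : ℕ} (hj : 1 ≤ j) :
    iteratedDeriv j (fun t => g t - c) = iteratedDeriv j g := by
  obtain ⟨m, rfl⟩ : ∃ m, j = m + 1 := ⟨j - 1, by omega⟩
  rw [iteratedDeriv_succ', iteratedDeriv_succ']
  have h : (deriv fun t => g t - c) = deriv g := funext fun t => deriv_sub_const (f := g) (x := t) c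
  rw [h]

private lemma itF_add_const {E' : Type*} [NormedAddCommGroup E'] [NormedSpace ℝ E']
    (f : E' → ℝ) (c : ℝ) (m : ℕ) (x : E') :
    iteratedFDeriv ℝ (m + 1) (fun y => f y + c) x = iteratedFDeriv ℝ (m + 1) f x := by
  rw [iteratedFDeriv_succ_eq_comp_right, iteratedFDeriv_succ_eq_comp_right]
  simp only [fderiv_add_const]

private lemma scaled_iter (g : ℝ → ℝ) {n : ℕ} (hg : ContDiffOn ℝ n g (Set.Ioi 0)) {r : ℝ}
    (hr : 0 < r) : ∀ i : ℕ, i ≤ n → ∀ t ∈ Set.Ioi (0 : ℝ),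
    iteratedDerivWithin i (fun s => g (r * s)) (Set.Ioi 0) t
      = r ^ i * iteratedDerivWithin i g (Set.Ioi 0) (r * t) := by
  have hu : UniqueDiffOn ℝ (Set.Ioi (0 : ℝ)) := isOpen_Ioi.uniqueDiffOn
  intro i
  induction i with
  | zero => intro _ t ht; simp
  | succ i ih =>
    intro hin t ht
    have hmem : r * t ∈ Set.Ioi (0 : ℝ) := mul_pos hr ht
    rw [iteratedDerivWithin_succ,
      derivWithin_congr (fun s hs => ih (Nat.le_of_succ_le hin) s hs)
        (ih (Nat.le_of_succ_le hin) t ht)]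
    have hdiff : DifferentiableWithinAt ℝ (iteratedDerivWithin i g (Set.Ioi 0))
        (Set.Ioi 0) (r * t) :=
      (hg.differentiableOn_iteratedDerivWithin (by exact_mod_cast Nat.lt_of_succ_le hin) hu)
        _ hmem
    have h1 := hdiff.hasDerivWithinAt
    have h2 : HasDerivWithinAt (fun s : ℝ => r * s) r (Set.Ioi 0) t := by
      simpa using (hasDerivWithinAt_id t (Set.Ioi (0 : ℝ))).const_mul r
    have h3 : HasDerivWithinAt (fun s => iteratedDerivWithin i g (Set.Ioi 0) (r * s))
        (derivWithin (iteratedDerivWithin i g (Set.Ioi 0)) (Set.Ioi 0) (r * t) * r)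
        (Set.Ioi 0) t :=
      HasDerivWithinAt.comp t h1 h2 (fun s hs => mul_pos hr hs)
    have h4 := h3.const_mul (r ^ i)
    rw [h4.derivWithin (hu t ht), iteratedDerivWithin_succ]
    ring

private lemma aux {E : Type*} [NormedAddCommGroup E] [InnerProductSpace ℝ E]
    [FiniteDimensional ℝ E] (ℓ : ℕ) (hℓ : 1 ≤ ℓ) :
    ∃ C : ℝ, 0 < C ∧
      ∀ g : ℝ → ℝ, ContDiffOn ℝ ℓ g (Set.Ioi 0) →
        ∀ x : E, x ≠ 0 →
          ‖iteratedFDeriv ℝ ℓ (fun y : E => g ‖y‖) x‖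
            ≤ C * ∑ j ∈ Finset.Icc 1 ℓ, |iteratedDeriv j g ‖x‖| * ‖x‖ ^ ((j : ℝ) - ℓ) := by
  have hsOpen : IsOpen ({(0 : E)}ᶜ : Set E) := isOpen_compl_singleton
  have hsU : UniqueDiffOn ℝ ({(0 : E)}ᶜ : Set E) := hsOpen.uniqueDiffOn
  have hIoiU : UniqueDiffOn ℝ (Set.Ioi (0 : ℝ)) := isOpen_Ioi.uniqueDiffOn
  have hnormCD : ContDiffOn ℝ ℓ (fun y : E => ‖y‖) ({(0 : E)}ᶜ) := fun y hy =>
    (contDiffAt_norm ℝ (Set.mem_compl_singleton_iff.mp hy)).contDiffWithinAt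
  have hsub : Metric.sphere (0 : E) 1 ⊆ ({(0 : E)}ᶜ : Set E) := by
    intro u hu
    simp only [Set.mem_compl_iff, Set.mem_singleton_iff]
    intro h
    rw [h] at hu
    simp at hu
  have key : ∀ i : ℕ, ∃ c : ℝ, ∀ u ∈ Metric.sphere (0 : E) 1, i ≤ ℓ →
      ‖iteratedFDerivWithin ℝ i (fun y : E => ‖y‖) ({(0 : E)}ᶜ) u‖ ≤ c := by
    intro i
    by_cases hi : i ≤ ℓ
    · have hcont : ContinuousOn
          (fun u : E => iteratedFDerivWithin ℝ i (fun y : E => ‖y‖) ({(0 : E)}ᶜ) u)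
          ({(0 : E)}ᶜ) :=
        hnormCD.continuousOn_iteratedFDerivWithin (by exact_mod_cast hi) hsU
      obtain ⟨c, hc⟩ := (isCompact_sphere (0 : E) 1).exists_bound_of_continuousOn
        (hcont.mono hsub)
      exact ⟨c, fun u hu _ => hc u hu⟩
    · exact ⟨0, fun u hu h => absurd h hi⟩
  choose c hc using key
  set D : ℝ := 1 + ∑ i ∈ Finset.range (ℓ + 1), max (c i) 0 with hD
  have hD1 : 1 ≤ D :=
    le_add_of_nonneg_right (Finset.sum_nonneg fun i _ => le_max_right _ _)
  have hD0 : 0 < D := lt_of_lt_of_le one_pos hD1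
  have hDb : ∀ i : ℕ, 1 ≤ i → i ≤ ℓ → ∀ u ∈ Metric.sphere (0 : E) 1,
      ‖iteratedFDerivWithin ℝ i (fun y : E => ‖y‖) ({(0 : E)}ᶜ) u‖ ≤ D ^ i := by
    intro i h1 hi u hu
    calc ‖iteratedFDerivWithin ℝ i (fun y : E => ‖y‖) ({(0 : E)}ᶜ) u‖ ≤ c i := hc i u hu hi
      _ ≤ max (c i) 0 := le_max_left _ _
      _ ≤ ∑ i ∈ Finset.range (ℓ + 1), max (c i) 0 :=
          Finset.single_le_sum (f := fun j => max (c j) 0) (fun j _ => le_max_right _ _) (Finset.mem_range.mpr (Nat.lt_succ_of_le hi))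
      _ ≤ D := le_add_of_nonneg_left zero_le_one
      _ ≤ D ^ i := le_self_pow₀ hD1 (Nat.one_le_iff_ne_zero.mp h1)
  refine ⟨(Nat.factorial ℓ : ℝ) * D ^ ℓ, by positivity, ?_⟩
  intro g hg x hx
  set r : ℝ := ‖x‖ with hr_def
  have hr : 0 < r := norm_pos_iff.mpr hx
  have hrne : r ≠ 0 := ne_of_gt hr
  set g₀ : ℝ → ℝ := fun t => g t - g r with hg₀_def
  have hg₀ : ContDiffOn ℝ ℓ g₀ (Set.Ioi 0) := hg.sub contDiffOn_const
  set G₀ : ℝ → ℝ := fun t => g₀ (r * t) with hG₀_def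
  have hG₀CD : ContDiffOn ℝ ℓ G₀ (Set.Ioi 0) := by
    apply hg₀.comp ((contDiff_const.mul contDiff_id).contDiffOn)
    intro t ht
    exact mul_pos hr ht
  set H : E → ℝ := G₀ ∘ fun y : E => ‖y‖ with hH_def
  let e : E ≃L[ℝ] E :=
    { LinearEquiv.smulOfNeZero ℝ E r⁻¹ (inv_ne_zero hrne) with
      continuous_toFun := continuous_const_smul _
      continuous_invFun := continuous_const_smul _ }
  have he : ∀ y : E, e y = r⁻¹ • y := fun y => rfl
  have hu1 : ‖e x‖ = 1 := by
    rw [he, norm_smul, norm_inv, Real.norm_eq_abs, abs_of_pos hr, inv_mul_cancel₀ hrne]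
  have hex : e x ∈ ({(0 : E)}ᶜ : Set E) := by
    refine Set.mem_compl_singleton_iff.mpr (fun h => ?_)
    rw [h] at hu1; simpa using hu1
  have hxmem : x ∈ ({(0 : E)}ᶜ : Set E) := Set.mem_compl_singleton_iff.mpr hx
  have hpre : (⇑e) ⁻¹' ({(0 : E)}ᶜ : Set E) = ({(0 : E)}ᶜ : Set E) := by
    ext y
    simp only [Set.mem_preimage, Set.mem_compl_iff, Set.mem_singleton_iff, he,
      smul_eq_zero, inv_eq_zero]
    tauto
  have hfun : (fun y : E => g ‖y‖) = fun y : E => (H ∘ ⇑e) y + g r := by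
    funext y
    simp only [hH_def, Function.comp_apply, hG₀_def, hg₀_def, he, norm_smul, norm_inv,
      Real.norm_eq_abs, abs_of_pos hr]
    rw [← mul_assoc, mul_inv_cancel₀ hrne, one_mul, sub_add_cancel]
  set Cg : ℝ := ∑ j ∈ Finset.Icc 1 ℓ, |iteratedDeriv j g r| * r ^ j with hCg_def
  have hCg0 : 0 ≤ Cg :=
    Finset.sum_nonneg fun j _ => mul_nonneg (abs_nonneg _) (pow_nonneg hr.le _)
  have hC : ∀ i : ℕ, i ≤ ℓ →
      ‖iteratedFDerivWithin ℝ i G₀ (Set.Ioi 0) ‖e x‖‖ ≤ Cg := by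
    intro i hi
    rw [hu1, norm_iteratedFDerivWithin_eq_norm_iteratedDerivWithin]
    rcases Nat.eq_zero_or_pos i with h0 | h1
    · subst h0
      have h : iteratedDerivWithin 0 G₀ (Set.Ioi 0) 1 = 0 := by
        simp [hG₀_def, hg₀_def]
      rw [h]; simpa using hCg0
    · have h1' : (1 : ℝ) ∈ Set.Ioi (0 : ℝ) := by norm_num
      rw [hG₀_def]
      rw [scaled_iter g₀ hg₀ hr i hi 1 h1', mul_one,
        iterDW_isOpen isOpen_Ioi (show r ∈ Set.Ioi (0:ℝ) from hr) i,
        hg₀_def, iterD_sub_const g (g r) h1,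
        Real.norm_eq_abs, abs_mul, abs_pow, abs_of_pos hr, mul_comm]
      rw [hCg_def]
      exact Finset.single_le_sum (f := fun j => |iteratedDeriv j g r| * r ^ j)
        (fun j _ => mul_nonneg (abs_nonneg _) (pow_nonneg hr.le _))
        (Finset.mem_Icc.mpr ⟨h1, hi⟩)
  have hmaps : Set.MapsTo (fun y : E => ‖y‖) ({(0 : E)}ᶜ) (Set.Ioi 0) := fun y hy =>
    norm_pos_iff.mpr (Set.mem_compl_singleton_iff.mp hy)
  have hcomp : ‖iteratedFDerivWithin ℝ ℓ H ({(0 : E)}ᶜ) (e x)‖ ≤ (Nat.factorial ℓ : ℝ) * Cg * D ^ ℓ :=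
    norm_iteratedFDerivWithin_comp_le hG₀CD hnormCD le_rfl hIoiU hsU hmaps hex hC
      (fun i h1 hi => hDb i h1 hi (e x) (mem_sphere_zero_iff_norm.mpr hu1))
  have hcr : iteratedFDerivWithin ℝ ℓ (H ∘ ⇑e) ({(0 : E)}ᶜ) x
      = (iteratedFDerivWithin ℝ ℓ H ({(0 : E)}ᶜ) (e x)).compContinuousLinearMap
        (fun _ => (e : E →L[ℝ] E)) := by
    have h := e.iteratedFDerivWithin_comp_right H hsU hex ℓ
    rwa [hpre] at h
  have heL : ‖(e : E →L[ℝ] E)‖ ≤ r⁻¹ := by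
    apply ContinuousLinearMap.opNorm_le_bound _ (inv_nonneg.mpr hr.le)
    intro y
    rw [ContinuousLinearEquiv.coe_coe, he, norm_smul, norm_inv, Real.norm_eq_abs,
      abs_of_pos hr]
  rw [hfun]
  obtain ⟨m, hm⟩ : ∃ m, ℓ = m + 1 := ⟨ℓ - 1, by omega⟩
  calc ‖iteratedFDeriv ℝ ℓ (fun y : E => (H ∘ ⇑e) y + g r) x‖
      = ‖iteratedFDeriv ℝ ℓ (H ∘ ⇑e) x‖ := by
        have h := itF_add_const (H ∘ ⇑e) (g r) m x
        rw [← hm] at h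
        rw [h]
    _ = ‖iteratedFDerivWithin ℝ ℓ (H ∘ ⇑e) ({(0 : E)}ᶜ) x‖ := by
        rw [iteratedFDerivWithin_of_isOpen (f := H ∘ ⇑e) ℓ hsOpen hxmem]
    _ = ‖(iteratedFDerivWithin ℝ ℓ H ({(0 : E)}ᶜ) (e x)).compContinuousLinearMap
          (fun _ => (e : E →L[ℝ] E))‖ := by rw [hcr]
    _ ≤ ‖iteratedFDerivWithin ℝ ℓ H ({(0 : E)}ᶜ) (e x)‖ *
          ∏ _i : Fin ℓ, ‖(e : E →L[ℝ] E)‖ :=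
        ContinuousMultilinearMap.norm_compContinuousLinearMap_le _ _
    _ ≤ ((Nat.factorial ℓ : ℝ) * Cg * D ^ ℓ) * r⁻¹ ^ ℓ := by
        have hprod : ∏ _i : Fin ℓ, ‖(e : E →L[ℝ] E)‖ ≤ r⁻¹ ^ ℓ := by
          rw [Finset.prod_const, Finset.card_univ, Fintype.card_fin]
          exact pow_le_pow_left₀ (norm_nonneg _) heL ℓ
        exact mul_le_mul hcomp hprod (Finset.prod_nonneg fun _ _ => norm_nonneg _)
          (by positivity)
    _ = (Nat.factorial ℓ : ℝ) * D ^ ℓ * ∑ j ∈ Finset.Icc 1 ℓ, |iteratedDeriv j g r| * r ^ ((j : ℝ) - ℓ) := by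
        have hterm : ∀ j ∈ Finset.Icc 1 ℓ,
            |iteratedDeriv j g r| * r ^ ((j : ℝ) - ℓ)
              = |iteratedDeriv j g r| * r ^ j * r⁻¹ ^ ℓ := by
          intro j hj
          rw [Real.rpow_sub hr, Real.rpow_natCast, Real.rpow_natCast, div_eq_mul_inv,
            ← inv_pow]
          ring
        rw [Finset.sum_congr rfl hterm, ← Finset.sum_mul, ← hCg_def]
        ring

/-- there is `C > 0`, depending only on `N` and `ℓ`, such that for every
`ℓ`-times continuously differentiable `g : (0,∞) → ℝ` and every `x ≠ 0` in `ℝ^N`, the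
`ℓ`-th Fréchet derivative of the radial function `x ↦ g(|x|)` satisfies
`‖D^ℓ (g ∘ |·|)(x)‖ ≤ C Σ_{j=1}^ℓ |g^{(j)}(|x|)| |x|^{j-ℓ}`. -/
theorem stmt_14 (N ℓ : ℕ) (hN : 1 ≤ N) (hℓ : 1 ≤ ℓ) :
    ∃ C : ℝ, 0 < C ∧
      ∀ g : ℝ → ℝ, ContDiffOn ℝ ℓ g (Set.Ioi 0) →
        ∀ x : EuclideanSpace ℝ (Fin N), x ≠ 0 →
          ‖iteratedFDeriv ℝ ℓ (fun y : EuclideanSpace ℝ (Fin N) => g ‖y‖) x‖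
            ≤ C * ∑ j ∈ Finset.Icc 1 ℓ, |iteratedDeriv j g ‖x‖| * ‖x‖ ^ ((j : ℝ) - ℓ) := by
  exact aux ℓ hℓ
end

section
/- Let N ≥ 2 and k ≥ 0 be integers, set ω_k := k(N+k−2), let V : [0,∞) → ℝ be continuous, and let h : (0,∞) → ℝ be a twice continuously differentiable function satisfying h''(r) + ((N−1)/r)·h'(r) − (V(r) + ω_k r^{−2})·h(r) = 0 for all r > 0 and lim_{r→0+} r^{−k} h(r) = 1. Then for every r > 0 one has h(r) = r^k · (1 + ∫₀^r s^{−2k−N+1} (∫₀^s τ^{k+N−1} V(τ) h(τ) dτ) ds), all integrals being absolutely convergent. -/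
open MeasureTheory

/-- a solution `h` of `h'' + (N-1)/r · h' - (V + ω_k r⁻²) h = 0` on `(0,∞)`
with `r^{-k} h(r) → 1` as `r → 0⁺` satisfies the Volterra integral equation
`h(r) = r^k (1 + ∫₀^r s^{-2k-N+1} (∫₀^s τ^{k+N-1} V(τ) h(τ) dτ) ds)`,
all integrals being absolutely convergent. -/
theorem stmt_15
    (N k : ℕ) (hN : 2 ≤ N)
    (V : ℝ → ℝ) (hV : ContinuousOn V (Set.Ici 0))
    (h : ℝ → ℝ) (hsmooth : ContDiffOn ℝ 2 h (Set.Ioi 0))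
    (hODE : ∀ r : ℝ, 0 < r →
      deriv (deriv h) r + ((N : ℝ) - 1) / r * deriv h r
        - (V r + (k : ℝ) * ((N : ℝ) + (k : ℝ) - 2) * r ^ (-2 : ℝ)) * h r = 0)
    (hzero : Filter.Tendsto (fun r : ℝ => r ^ (-(k : ℝ)) * h r)
      (nhdsWithin 0 (Set.Ioi 0)) (nhds 1)) :
    ∀ r : ℝ, 0 < r →
      IntegrableOn (fun τ : ℝ => τ ^ ((k : ℝ) + (N : ℝ) - 1) * V τ * h τ) (Set.Ioc 0 r) ∧
      IntegrableOn (fun s : ℝ => s ^ (1 - 2 * (k : ℝ) - (N : ℝ)) *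
        ∫ τ in Set.Ioc (0 : ℝ) s, τ ^ ((k : ℝ) + (N : ℝ) - 1) * V τ * h τ) (Set.Ioc 0 r) ∧
      h r = r ^ (k : ℝ) *
        (1 + ∫ s in Set.Ioc (0 : ℝ) r, s ^ (1 - 2 * (k : ℝ) - (N : ℝ)) *
          ∫ τ in Set.Ioc (0 : ℝ) s, τ ^ ((k : ℝ) + (N : ℝ) - 1) * V τ * h τ) := by
  have hn2 : (2:ℝ) ≤ (N:ℝ) := by exact_mod_cast hN
  have hK0 : (0:ℝ) ≤ (k:ℝ) := Nat.cast_nonneg k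
  -- differentiability facts
  have hder : ∀ x ∈ Set.Ioi (0:ℝ), HasDerivAt h (deriv h x) x := fun x hx =>
    (((hsmooth.differentiableOn (by norm_num)) x hx).differentiableAt
      (isOpen_Ioi.mem_nhds hx)).hasDerivAt
  have hd1 : ContDiffOn ℝ 1 (deriv h) (Set.Ioi 0) :=
    hsmooth.deriv_of_isOpen isOpen_Ioi (by norm_num)
  have hdcont : ContinuousOn (deriv h) (Set.Ioi 0) := hd1.continuousOn
  have hder2 : ∀ x ∈ Set.Ioi (0:ℝ), HasDerivAt (deriv h) (deriv (deriv h) x) x := fun x hx =>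
    (((hd1.differentiableOn one_ne_zero) x hx).differentiableAt
      (isOpen_Ioi.mem_nhds hx)).hasDerivAt
  have hhcont : ContinuousOn h (Set.Ioi 0) := hsmooth.continuousOn
  set p : ℝ := 1 - 2 * (k : ℝ) - (N : ℝ) with hp_def
  set f : ℝ → ℝ := fun τ : ℝ => τ ^ ((k : ℝ) + (N : ℝ) - 1) * V τ * h τ with hf_def
  set F : ℝ → ℝ := fun x : ℝ =>
    x ^ ((N:ℝ) + (k:ℝ) - 1) * deriv h x - (k:ℝ) * (x ^ ((N:ℝ) + (k:ℝ) - 2) * h x) with hF_def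
  set g : ℝ → ℝ := fun x : ℝ => x ^ (-(k:ℝ)) * h x with hg_def
  -- continuity of f, F on Ioi 0
  have hrpow_cont : ∀ q : ℝ, ContinuousOn (fun x : ℝ => x ^ q) (Set.Ioi 0) := fun q x hx =>
    (Real.continuousAt_rpow_const x q (Or.inl (ne_of_gt hx))).continuousWithinAt
  have hfcont : ContinuousOn f (Set.Ioi 0) := by
    refine ((hrpow_cont _).mul (hV.mono fun x hx => Set.mem_Ici.2 (le_of_lt hx))).mul hhcont
  have hFcont : ContinuousOn F (Set.Ioi 0) := by
    refine ((hrpow_cont _).mul hdcont).sub (continuousOn_const.mul ((hrpow_cont _).mul hhcont))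
  -- derivative of F
  have hF' : ∀ r : ℝ, 0 < r → HasDerivAt F (f r) r := by
    intro r hr
    have h1 : HasDerivAt (fun x : ℝ => x ^ ((N:ℝ) + (k:ℝ) - 1))
        (((N:ℝ) + (k:ℝ) - 1) * r ^ ((N:ℝ) + (k:ℝ) - 1 - 1)) r :=
      Real.hasDerivAt_rpow_const (Or.inl (ne_of_gt hr))
    have h2 : HasDerivAt (fun x : ℝ => x ^ ((N:ℝ) + (k:ℝ) - 2))
        (((N:ℝ) + (k:ℝ) - 2) * r ^ ((N:ℝ) + (k:ℝ) - 2 - 1)) r :=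
      Real.hasDerivAt_rpow_const (Or.inl (ne_of_gt hr))
    have H := (h1.mul (hder2 r hr)).sub ((h2.mul (hder r hr)).const_mul (k:ℝ))
    have hdd : deriv (deriv h) r
        = (V r + (k:ℝ)*((N:ℝ)+(k:ℝ)-2)*r^(-2:ℝ)) * h r - ((N:ℝ)-1)/r * deriv h r := by
      linarith [hODE r hr]
    have hrne : r ≠ 0 := ne_of_gt hr
    have e4 : r ^ (2:ℝ) = r * r := by
      rw [show (2:ℝ) = ((2:ℕ):ℝ) by norm_num, Real.rpow_natCast]; ring
    have e1 : r ^ ((N:ℝ)+(k:ℝ)-1-1) = r ^ ((N:ℝ)+(k:ℝ)-1) / r := by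
      rw [Real.rpow_sub hr, Real.rpow_one]
    have e2 : r ^ ((N:ℝ)+(k:ℝ)-2) = r ^ ((N:ℝ)+(k:ℝ)-1) / r := by
      rw [show (N:ℝ)+(k:ℝ)-2 = ((N:ℝ)+(k:ℝ)-1) - 1 by ring, Real.rpow_sub hr, Real.rpow_one]
    have e3 : r ^ ((N:ℝ)+(k:ℝ)-2-1) = r ^ ((N:ℝ)+(k:ℝ)-1) / (r*r) := by
      rw [show (N:ℝ)+(k:ℝ)-2-1 = ((N:ℝ)+(k:ℝ)-1) - 2 by ring, Real.rpow_sub hr, e4]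
    have e5 : r ^ (-2:ℝ) = 1/(r*r) := by
      rw [show (-2:ℝ) = -(2:ℝ) by norm_num, Real.rpow_neg hr.le, e4]; field_simp
    have egoal : f r = r ^ ((N:ℝ)+(k:ℝ)-1) * V r * h r := by
      rw [hf_def, show (k:ℝ)+(N:ℝ)-1 = (N:ℝ)+(k:ℝ)-1 by ring]
    rw [hF_def]
    refine H.congr_deriv ?_
    symm
    rw [egoal, hdd, e1, e2, e3, e5]
    field_simp
    ring
  -- derivative of g
  have hg' : ∀ s : ℝ, 0 < s → HasDerivAt g (s ^ p * F s) s := by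
    intro s hs0
    have h1 : HasDerivAt (fun x : ℝ => x ^ (-(k:ℝ))) ((-(k:ℝ)) * s ^ (-(k:ℝ) - 1)) s :=
      Real.hasDerivAt_rpow_const (Or.inl (ne_of_gt hs0))
    have H := h1.mul (hder s hs0)
    have m1 : s ^ p * s ^ ((N:ℝ)+(k:ℝ)-1) = s ^ (-(k:ℝ)) := by
      rw [← Real.rpow_add hs0]; congr 1; rw [hp_def]; ring
    have m2 : s ^ p * s ^ ((N:ℝ)+(k:ℝ)-2) = s ^ (-(k:ℝ) - 1) := by
      rw [← Real.rpow_add hs0]; congr 1; rw [hp_def]; ring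
    rw [hg_def]
    refine H.congr_deriv ?_
    symm
    rw [hF_def]
    calc s ^ p * (s ^ ((N:ℝ)+(k:ℝ)-1) * deriv h s - (k:ℝ) * (s ^ ((N:ℝ)+(k:ℝ)-2) * h s))
        = (s ^ p * s ^ ((N:ℝ)+(k:ℝ)-1)) * deriv h s
          - (k:ℝ) * ((s ^ p * s ^ ((N:ℝ)+(k:ℝ)-2)) * h s) := by ring
      _ = (-(k:ℝ)) * s ^ (-(k:ℝ) - 1) * h s + s ^ (-(k:ℝ)) * deriv h s := by
          rw [m1, m2]; ring
  -- bound for h near 0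
  obtain ⟨ε, hε0, hεbd⟩ : ∃ ε, ε > 0 ∧ ∀ s ∈ Set.Ioc (0:ℝ) ε, |h s| ≤ 2 * s ^ (k:ℝ) := by
    have h1 : ∀ᶠ s in nhdsWithin 0 (Set.Ioi 0), |g s - 1| < 1 := by
      have := Metric.tendsto_nhds.1 hzero 1 one_pos
      simpa [Real.dist_eq] using this
    rw [Filter.eventually_iff] at h1
    obtain ⟨u, hu, hsub⟩ := mem_nhdsGT_iff_exists_Ioc_subset.1 h1
    refine ⟨u, hu, fun s hs => ?_⟩
    have hs0 : 0 < s := hs.1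
    have h2 : |g s| ≤ 2 := by
      have h3 := hsub hs
      have : |g s| ≤ |g s - 1| + 1 := by
        calc |g s| = |(g s - 1) + 1| := by ring_nf
          _ ≤ |g s - 1| + |(1:ℝ)| := abs_add_le _ _
          _ = |g s - 1| + 1 := by rw [abs_one]
      simp only [Set.mem_setOf_eq] at h3
      linarith
    have hid : h s = s ^ (k:ℝ) * g s := by
      rw [hg_def, ← mul_assoc, ← Real.rpow_add hs0]
      simp
    rw [hid, abs_mul, abs_of_nonneg (Real.rpow_nonneg hs0.le _)]
    have := mul_le_mul_of_nonneg_left h2 (Real.rpow_nonneg hs0.le (k:ℝ))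
    linarith
  -- generic bounded-integrability helper
  have haux : ∀ (G : ℝ → ℝ) (r C : ℝ), ContinuousOn G (Set.Ioc 0 r) →
      (∀ x ∈ Set.Ioc (0:ℝ) r, |G x| ≤ C) → IntegrableOn G (Set.Ioc 0 r) := by
    intro G r C hc hb
    have h1 : volume (Set.Ioc (0:ℝ) r) ≠ ⊤ := measure_Ioc_lt_top.ne
    rw [← lt_top_iff_ne_top] at h1
    have h2 : AEStronglyMeasurable G (volume.restrict (Set.Ioc (0:ℝ) r)) :=
      hc.aestronglyMeasurable measurableSet_Ioc
    have h3 : ∀ᵐ x ∂(volume.restrict (Set.Ioc (0:ℝ) r)), ‖G x‖ ≤ C :=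
      (ae_restrict_iff' measurableSet_Ioc).2 (ae_of_all _ (by
        simpa [Real.norm_eq_abs] using hb))
    exact ⟨h2, HasFiniteIntegral.restrict_of_bounded (C := C) h1 h3⟩
  -- now fix r
  intro r hr
  -- bound for V on [0, r]
  obtain ⟨M, hM0, hM⟩ : ∃ M : ℝ, 0 ≤ M ∧ ∀ τ ∈ Set.Icc (0:ℝ) r, |V τ| ≤ M := by
    obtain ⟨M, hM⟩ := (isCompact_Icc (a := (0:ℝ)) (b := r)).exists_bound_of_continuousOn
      (hV.mono (fun x hx => hx.1))
    exact ⟨max M 0, le_max_right _ _, fun τ hτ =>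
      le_trans (by simpa [Real.norm_eq_abs] using hM τ hτ) (le_max_left _ _)⟩
  set ε' : ℝ := min ε r with hε'_def
  have hε'0 : 0 < ε' := lt_min hε0 hr
  have hε'r : ε' ≤ r := min_le_right _ _
  have hε'ε : ε' ≤ ε := min_le_left _ _
  -- pointwise bound for f near 0
  have hfptw : ∀ τ ∈ Set.Ioc (0:ℝ) ε', |f τ| ≤ 2 * M * τ ^ (2*(k:ℝ)+(N:ℝ)-1) := by
    intro τ hτ
    have hτ0 : 0 < τ := hτ.1
    have hτε : τ ≤ ε := le_trans hτ.2 hε'ε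
    have hτr : τ ≤ r := le_trans hτ.2 hε'r
    have hhb := hεbd τ ⟨hτ0, hτε⟩
    have hVb := hM τ ⟨hτ0.le, hτr⟩
    have habs : |f τ| = τ ^ ((k:ℝ)+(N:ℝ)-1) * |V τ| * |h τ| := by
      rw [hf_def]
      rw [abs_mul, abs_mul, abs_of_nonneg (Real.rpow_nonneg hτ0.le _)]
    rw [habs]
    have h1 : τ ^ ((k:ℝ)+(N:ℝ)-1) * |V τ| * |h τ| ≤ τ ^ ((k:ℝ)+(N:ℝ)-1) * M * (2 * τ ^ (k:ℝ)) := by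
      apply mul_le_mul
      · exact mul_le_mul_of_nonneg_left hVb (Real.rpow_nonneg hτ0.le _)
      · exact hhb
      · exact abs_nonneg _
      · positivity
    have h2 : τ ^ ((k:ℝ)+(N:ℝ)-1) * M * (2 * τ ^ (k:ℝ)) = 2 * M * τ ^ (2*(k:ℝ)+(N:ℝ)-1) := by
      rw [show (2:ℝ)*(k:ℝ)+(N:ℝ)-1 = ((k:ℝ)+(N:ℝ)-1) + (k:ℝ) by ring, Real.rpow_add hτ0]
      ring
    linarith
  -- f is bounded on Ioc 0 r
  obtain ⟨C₁, hC₁⟩ : ∃ C, ∀ τ ∈ Set.Ioc (0:ℝ) r, |f τ| ≤ C := by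
    obtain ⟨C₂, hC₂⟩ := (isCompact_Icc (a := ε') (b := r)).exists_bound_of_continuousOn
      (hfcont.mono (fun x hx => lt_of_lt_of_le hε'0 hx.1))
    refine ⟨max (2 * M * (max 1 r) ^ (2*(k:ℝ)+(N:ℝ)-1)) C₂, fun τ hτ => ?_⟩
    rcases le_or_gt τ ε' with hcase | hcase
    · refine le_trans (hfptw τ ⟨hτ.1, hcase⟩) (le_trans ?_ (le_max_left _ _))
      have : τ ^ (2*(k:ℝ)+(N:ℝ)-1) ≤ (max 1 r) ^ (2*(k:ℝ)+(N:ℝ)-1) :=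
        Real.rpow_le_rpow hτ.1.le (le_trans hτ.2 (le_max_right 1 r)) (by linarith)
      nlinarith [Real.rpow_nonneg (le_trans zero_le_one (le_max_left 1 r)) (2*(k:ℝ)+(N:ℝ)-1)]
    · exact le_trans (by rw [← Real.norm_eq_abs]; exact hC₂ τ ⟨hcase.le, hτ.2⟩) (le_max_right _ _)
  have hfint : IntegrableOn f (Set.Ioc 0 r) :=
    haux f r C₁ (hfcont.mono (fun x hx => hx.1)) hC₁
  set w : ℝ → ℝ := fun s : ℝ => ∫ τ in Set.Ioc (0:ℝ) s, f τ with hw_def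
  have hw_app : ∀ s : ℝ, (∫ τ in Set.Ioc (0:ℝ) s, f τ) = w s := fun s => rfl
  have hwcont : ContinuousOn w (Set.Icc 0 r) :=
    intervalIntegral.continuousOn_primitive ((integrableOn_Icc_iff_integrableOn_Ioc (by simp)).2 hfint)
  have hw0' : Filter.Tendsto w (nhdsWithin 0 (Set.Ioi 0)) (nhds 0) := by
    have h1 : ContinuousWithinAt w (Set.Icc 0 r) 0 := hwcont 0 (Set.left_mem_Icc.2 hr.le)
    have h2 : w 0 = 0 := by simp [hw_def]
    have h3 := h1.tendsto
    rw [h2] at h3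
    exact h3.mono_left (nhdsWithin_le_of_mem (Filter.mem_of_superset
      (Ioc_mem_nhdsGT hr) Set.Ioc_subset_Icc_self))
  have hwadd : ∀ a b : ℝ, 0 < a → a ≤ b → b ≤ r → w b - w a = ∫ t in a..b, f t := by
    intro a b ha hab hbr
    have h1 : IntegrableOn f (Set.Ioc 0 a) := hfint.mono_set
      (Set.Ioc_subset_Ioc_right (hab.trans hbr))
    have h2 : IntegrableOn f (Set.Ioc a b) := hfint.mono_set (Set.Ioc_subset_Ioc ha.le hbr)
    rw [intervalIntegral.integral_of_le hab]
    have hu : Set.Ioc (0:ℝ) a ∪ Set.Ioc a b = Set.Ioc 0 b := Set.Ioc_union_Ioc_eq_Ioc ha.le hab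
    have := setIntegral_union (Set.Ioc_disjoint_Ioc_of_le le_rfl) measurableSet_Ioc h1 h2 (f := f)
      (μ := volume)
    rw [hu] at this
    simp only [hw_def]
    rw [this]; ring
  have hFTC : ∀ a b : ℝ, 0 < a → a ≤ b → F b - F a = ∫ t in a..b, f t := by
    intro a b ha hab
    symm
    apply intervalIntegral.integral_eq_sub_of_hasDerivAt
    · intro x hx
      rw [Set.uIcc_of_le hab] at hx
      exact hF' x (lt_of_lt_of_le ha hx.1)
    · apply ContinuousOn.intervalIntegrable
      apply hfcont.mono
      rw [Set.uIcc_of_le hab]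
      exact fun x hx => lt_of_lt_of_le ha hx.1
  have hconst : ∀ a : ℝ, 0 < a → a ≤ r → F a - w a = F r - w r := by
    intro a ha har
    have h1 := hFTC a r ha har
    have h2 := hwadd a r ha har le_rfl
    linarith
  -- the limit L is zero
  have hL : F r - w r = 0 := by
    by_contra hL0
    set L : ℝ := F r - w r with hLdef
    have hLpos : 0 < |L| := abs_pos.2 hL0
    have hev : ∀ᶠ a in nhdsWithin 0 (Set.Ioi 0), |w a| ≤ |L|/2 ∧ |g a| ≤ 2 := by
      have e1 : ∀ᶠ a in nhdsWithin 0 (Set.Ioi 0), |w a| ≤ |L|/2 := by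
        have := Metric.tendsto_nhds.1 hw0' (|L|/2) (by positivity)
        filter_upwards [this] with a ha
        rw [Real.dist_eq, sub_zero] at ha
        exact ha.le
      have e2 : ∀ᶠ a in nhdsWithin 0 (Set.Ioi 0), |g a| ≤ 2 := by
        have := Metric.tendsto_nhds.1 hzero 1 one_pos
        filter_upwards [this] with a ha
        rw [Real.dist_eq] at ha
        have : |g a| ≤ |g a - 1| + 1 := by
          calc |g a| = |(g a - 1) + 1| := by ring_nf
            _ ≤ |g a - 1| + |(1:ℝ)| := abs_add_le _ _
            _ = |g a - 1| + 1 := by rw [abs_one]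
        linarith
      exact e1.and e2
    rw [Filter.eventually_iff] at hev
    obtain ⟨δ₁, hδ₁, hδsub⟩ := mem_nhdsGT_iff_exists_Ioc_subset.1 hev
    set δ : ℝ := min δ₁ r with hδ_def
    have hδ0 : 0 < δ := lt_min hδ₁ hr
    have hδr : δ ≤ r := min_le_right _ _
    have hprop : ∀ a ∈ Set.Ioc (0:ℝ) δ, |w a| ≤ |L|/2 ∧ |g a| ≤ 2 := fun a ha =>
      hδsub ⟨ha.1, le_trans ha.2 (min_le_left _ _)⟩
    -- key inequality
    have hkey : ∀ a ∈ Set.Ioo (0:ℝ) δ, (|L|/2) * (∫ s in a..δ, s ^ p) ≤ 4 := by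
      intro a ha
      have ha0 : 0 < a := ha.1
      have haδ : a ≤ δ := ha.2.le
      have hIccpos : Set.Icc a δ ⊆ Set.Ioi (0:ℝ) := fun x hx => lt_of_lt_of_le ha0 hx.1
      have hpFcont : ContinuousOn (fun s : ℝ => s ^ p * F s) (Set.Icc a δ) :=
        ((hrpow_cont p).mono hIccpos).mul (hFcont.mono hIccpos)
      have hii : IntervalIntegrable (fun s : ℝ => s ^ p * F s) volume a δ :=
        hpFcont.intervalIntegrable_of_Icc haδ
      have hgFTC : (∫ s in a..δ, s ^ p * F s) = g δ - g a := by
        apply intervalIntegral.integral_eq_sub_of_hasDerivAt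
        · intro x hx
          rw [Set.uIcc_of_le haδ] at hx
          exact hg' x (hIccpos hx)
        · exact hii
      have hiip : IntervalIntegrable (fun s : ℝ => s ^ p) volume a δ :=
        ((hrpow_cont p).mono hIccpos).intervalIntegrable_of_Icc haδ
      have hiiw : IntervalIntegrable (fun s : ℝ => s ^ p * (F s - L)) volume a δ :=
        (((hrpow_cont p).mono hIccpos).mul ((hFcont.mono hIccpos).sub
          continuousOn_const)).intervalIntegrable_of_Icc haδ
      set I : ℝ := ∫ s in a..δ, s ^ p with hI_def
      have hsplit : (∫ s in a..δ, s ^ p * F s)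
          = L * I + ∫ s in a..δ, s ^ p * (F s - L) := by
        rw [hI_def, ← intervalIntegral.integral_const_mul,
          ← intervalIntegral.integral_add (hiip.const_mul L) hiiw]
        apply intervalIntegral.integral_congr
        intro s _
        ring
      have hE : |∫ s in a..δ, s ^ p * (F s - L)| ≤ (|L|/2) * I := by
        have hptw : ∀ s ∈ Set.Icc a δ, |s ^ p * (F s - L)| ≤ (|L|/2) * s ^ p := by
          intro s hs
          have hs0 : 0 < s := hIccpos hs
          have hsδ : s ≤ δ := hs.2
          have hFsL : F s - L = w s := by
            have := hconst s hs0 (hsδ.trans hδr)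
            rw [hLdef]; linarith
          rw [abs_mul, abs_of_nonneg (Real.rpow_nonneg hs0.le _), hFsL]
          calc s ^ p * |w s| ≤ s ^ p * (|L|/2) :=
                mul_le_mul_of_nonneg_left (hprop s ⟨hs0, hsδ⟩).1 (Real.rpow_nonneg hs0.le _)
            _ = (|L|/2) * s ^ p := by ring
        calc |∫ s in a..δ, s ^ p * (F s - L)|
            ≤ ∫ s in a..δ, |s ^ p * (F s - L)| :=
              intervalIntegral.abs_integral_le_integral_abs haδ
          _ ≤ ∫ s in a..δ, (|L|/2) * s ^ p := by
              apply intervalIntegral.integral_mono_on haδ hiiw.abs (hiip.const_mul _)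
              exact hptw
          _ = (|L|/2) * I := by rw [hI_def, intervalIntegral.integral_const_mul]
      have hI0 : 0 ≤ I := by
        rw [hI_def]
        apply intervalIntegral.integral_nonneg haδ
        intro s hs
        exact Real.rpow_nonneg (le_trans ha0.le hs.1) _
      have hg4 : |g δ - g a| ≤ 4 := by
        have h1 := (hprop δ ⟨hδ0, le_rfl⟩).2
        have h2 := (hprop a ⟨ha0, haδ⟩).2
        calc |g δ - g a| ≤ |g δ| + |g a| := abs_sub _ _
          _ ≤ 4 := by linarith
      have habs1 : |L * I| ≤ |L * I + ∫ s in a..δ, s ^ p * (F s - L)|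
          + |∫ s in a..δ, s ^ p * (F s - L)| := by
        calc |L * I| = |(L * I + ∫ s in a..δ, s ^ p * (F s - L))
            - ∫ s in a..δ, s ^ p * (F s - L)| := by rw [add_sub_cancel_right]
          _ ≤ _ := abs_sub _ _
      have habs2 : |L * I| = |L| * I := by rw [abs_mul, abs_of_nonneg hI0]
      have hfin : |g δ - g a| = |L * I + ∫ s in a..δ, s ^ p * (F s - L)| := by
        rw [← hgFTC, hsplit]
      rw [hfin] at hg4
      linarith
    -- divergence of the integral as a → 0⁺
    have hp1 : p + 1 ≤ 0 := by rw [hp_def]; linarith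
    have hdiv : Filter.Tendsto (fun a : ℝ => ∫ s in a..δ, s ^ p)
        (nhdsWithin 0 (Set.Ioi 0)) Filter.atTop := by
      rcases eq_or_lt_of_le hp1 with hpe | hpl
      · -- p = -1
        have hpeq : p = -1 := by linarith
        have hcongr : ∀ᶠ a in nhdsWithin 0 (Set.Ioi 0),
            Real.log δ + -Real.log a = ∫ s in a..δ, s ^ p := by
          filter_upwards [Ioo_mem_nhdsGT hδ0] with a ha
          have hEq : ∀ s ∈ Set.uIcc a δ, s ^ p = s⁻¹ := by
            intro s hs
            rw [Set.uIcc_of_le ha.2.le] at hs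
            rw [hpeq, Real.rpow_neg_one]
          rw [intervalIntegral.integral_congr hEq, integral_inv_of_pos ha.1 hδ0,
            Real.log_div (ne_of_gt hδ0) (ne_of_gt ha.1)]
          ring
        apply Filter.Tendsto.congr' hcongr
        apply Filter.tendsto_atTop_add_const_left
        exact Filter.tendsto_neg_atBot_atTop.comp Real.tendsto_log_nhdsGT_zero
      · -- p < -1
        have hppos : 0 < -(p+1) := by linarith
        have h1 : Filter.Tendsto (fun a : ℝ => a ^ (p+1)) (nhdsWithin 0 (Set.Ioi 0))
            Filter.atTop := by
          have h2 := (tendsto_rpow_atTop hppos).comp tendsto_inv_nhdsGT_zero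
          apply h2.congr'
          filter_upwards [self_mem_nhdsWithin] with a ha
          have ha0 : (0:ℝ) < a := ha
          simp only [Function.comp_apply]
          rw [Real.inv_rpow ha0.le, ← Real.rpow_neg ha0.le, neg_neg]
        have hformula : ∀ᶠ a in nhdsWithin 0 (Set.Ioi 0),
            (a ^ (p+1) - δ ^ (p+1)) * (-(p+1))⁻¹ = ∫ s in a..δ, s ^ p := by
          filter_upwards [Ioo_mem_nhdsGT hδ0] with a ha
          rw [integral_rpow (Or.inr ⟨by linarith, by
            rw [Set.uIcc_of_le ha.2.le]
            exact fun hc => absurd hc.1 (not_le.2 ha.1)⟩)]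
          have hne : p + 1 ≠ 0 := by linarith
          have generic : ∀ x y q : ℝ, (x - y) * (-q)⁻¹ = (y - x)/q := by
            intro x y q; rw [inv_neg, div_eq_mul_inv]; ring
          exact generic _ _ _
        apply Filter.Tendsto.congr' hformula
        apply Filter.Tendsto.atTop_mul_const (by positivity)
        exact Filter.tendsto_atTop_add_const_right _ _ h1
    have hc1 : ∀ᶠ a in nhdsWithin 0 (Set.Ioi 0), (10/|L|) ≤ ∫ s in a..δ, s ^ p :=
      hdiv.eventually_ge_atTop _
    have hc2 : Set.Ioo (0:ℝ) δ ∈ nhdsWithin 0 (Set.Ioi 0) := Ioo_mem_nhdsGT hδ0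
    obtain ⟨a, h1, h2⟩ := (hc1.and (Filter.eventually_of_mem hc2 (fun x hx => hx))).exists
    have h3 := hkey a h2
    have h4 : (|L|/2) * (10/|L|) ≤ (|L|/2) * (∫ s in a..δ, s ^ p) :=
      mul_le_mul_of_nonneg_left h1 (by positivity)
    have h5 : (|L|/2) * (10/|L|) = 5 := by field_simp; ring
    linarith
  -- F = w on (0, r]
  have hFw : ∀ s : ℝ, 0 < s → s ≤ r → F s = w s := by
    intro s hs hsr
    have := hconst s hs hsr
    linarith
  -- integrability of the outer integrand
  have hGcont : ContinuousOn (fun s : ℝ => s ^ p * w s) (Set.Ioc 0 r) :=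
    ((hrpow_cont p).mono (fun x hx => hx.1)).mul (hwcont.mono Set.Ioc_subset_Icc_self)
  have hc : (0:ℝ) < 2*(k:ℝ)+(N:ℝ) := by linarith
  have hwptw : ∀ s ∈ Set.Ioc (0:ℝ) ε', |w s| ≤ (2*M/(2*(k:ℝ)+(N:ℝ))) * s ^ (2*(k:ℝ)+(N:ℝ)) := by
    intro s hs
    have hs0 : 0 < s := hs.1
    have hsr : s ≤ r := le_trans hs.2 hε'r
    have hfs : IntegrableOn f (Set.Ioc 0 s) := hfint.mono_set (Set.Ioc_subset_Ioc_right hsr)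
    have hint2 : IntegrableOn (fun τ : ℝ => 2*M*τ ^ (2*(k:ℝ)+(N:ℝ)-1)) (Set.Ioc 0 s) := by
      have hii : IntervalIntegrable (fun τ : ℝ => τ ^ (2*(k:ℝ)+(N:ℝ)-1)) volume 0 s :=
        intervalIntegral.intervalIntegrable_rpow' (by linarith)
      exact ((intervalIntegrable_iff_integrableOn_Ioc_of_le hs0.le).1 hii).const_mul _
    have step1 : |w s| ≤ ∫ τ in Set.Ioc (0:ℝ) s, |f τ| := by
      simpa [Real.norm_eq_abs] using
        norm_integral_le_integral_norm (μ := volume.restrict (Set.Ioc (0:ℝ) s)) f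
    have step2 : (∫ τ in Set.Ioc (0:ℝ) s, |f τ|)
        ≤ ∫ τ in Set.Ioc (0:ℝ) s, 2*M*τ ^ (2*(k:ℝ)+(N:ℝ)-1) := by
      apply setIntegral_mono_on hfs.abs hint2 measurableSet_Ioc
      intro τ hτ
      exact hfptw τ ⟨hτ.1, le_trans hτ.2 hs.2⟩
    have step3 : (∫ τ in Set.Ioc (0:ℝ) s, 2*M*τ ^ (2*(k:ℝ)+(N:ℝ)-1))
        = (2*M/(2*(k:ℝ)+(N:ℝ))) * s ^ (2*(k:ℝ)+(N:ℝ)) := by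
      rw [MeasureTheory.integral_const_mul, ← intervalIntegral.integral_of_le hs0.le,
        integral_rpow (Or.inl (by linarith))]
      rw [Real.zero_rpow (by linarith), show (2:ℝ)*(k:ℝ)+(N:ℝ)-1+1 = 2*(k:ℝ)+(N:ℝ) by ring]
      field_simp
      ring
    linarith
  obtain ⟨C₃, hC₃⟩ : ∃ C, ∀ s ∈ Set.Ioc (0:ℝ) r, |s ^ p * w s| ≤ C := by
    obtain ⟨C₄, hC₄⟩ := (isCompact_Icc (a := ε') (b := r)).exists_bound_of_continuousOn
      (hGcont.mono (fun x hx => ⟨lt_of_lt_of_le hε'0 hx.1, hx.2⟩))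
    refine ⟨max ((2*M/(2*(k:ℝ)+(N:ℝ))) * r) C₄, fun s hs => ?_⟩
    rcases le_or_gt s ε' with hcase | hcase
    · have hs0 : 0 < s := hs.1
      have key : |s ^ p * w s| ≤ (2*M/(2*(k:ℝ)+(N:ℝ))) * s := by
        rw [abs_mul, abs_of_nonneg (Real.rpow_nonneg hs0.le _)]
        have h1 : s ^ p * |w s| ≤ s ^ p * ((2*M/(2*(k:ℝ)+(N:ℝ))) * s ^ (2*(k:ℝ)+(N:ℝ))) :=
          mul_le_mul_of_nonneg_left (hwptw s ⟨hs0, hcase⟩) (Real.rpow_nonneg hs0.le _)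
        have h2 : s ^ p * s ^ (2*(k:ℝ)+(N:ℝ)) = s := by
          rw [← Real.rpow_add hs0, hp_def, show 1 - 2*(k:ℝ) - (N:ℝ) + (2*(k:ℝ)+(N:ℝ)) = 1 by ring,
            Real.rpow_one]
        calc s ^ p * |w s| ≤ s ^ p * ((2*M/(2*(k:ℝ)+(N:ℝ))) * s ^ (2*(k:ℝ)+(N:ℝ))) := h1
          _ = (2*M/(2*(k:ℝ)+(N:ℝ))) * (s ^ p * s ^ (2*(k:ℝ)+(N:ℝ))) := by ring
          _ = (2*M/(2*(k:ℝ)+(N:ℝ))) * s := by rw [h2]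
      refine le_trans key (le_trans ?_ (le_max_left _ _))
      have : (0:ℝ) ≤ 2*M/(2*(k:ℝ)+(N:ℝ)) := by positivity
      nlinarith [hs.2]
    · exact le_trans (by rw [← Real.norm_eq_abs]; exact hC₄ s ⟨hcase.le, hs.2⟩) (le_max_right _ _)
  have hGint : IntegrableOn (fun s : ℝ => s ^ p * w s) (Set.Ioc 0 r) :=
    haux _ r C₃ hGcont hC₃
  -- the final identity
  have hGprim : Filter.Tendsto (fun a : ℝ => ∫ s in Set.Ioc (0:ℝ) a, s ^ p * w s)
      (nhdsWithin 0 (Set.Ioi 0)) (nhds 0) := by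
    have hWcont : ContinuousOn (fun x : ℝ => ∫ s in Set.Ioc (0:ℝ) x, s ^ p * w s)
        (Set.Icc 0 r) :=
      intervalIntegral.continuousOn_primitive ((integrableOn_Icc_iff_integrableOn_Ioc enorm_ne_top).2 hGint)
    have h1 := (hWcont 0 (Set.left_mem_Icc.2 hr.le)).tendsto
    have h2 : (∫ s in Set.Ioc (0:ℝ) 0, s ^ p * w s) = 0 := by simp
    rw [h2] at h1
    exact h1.mono_left (nhdsWithin_le_of_mem (Filter.mem_of_superset
      (Ioc_mem_nhdsGT hr) Set.Ioc_subset_Icc_self))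
  have hGadd : ∀ a : ℝ, 0 < a → a ≤ r →
      (∫ s in Set.Ioc (0:ℝ) r, s ^ p * w s) - (∫ s in Set.Ioc (0:ℝ) a, s ^ p * w s)
        = ∫ s in a..r, s ^ p * w s := by
    intro a ha har
    have h1 : IntegrableOn (fun s : ℝ => s ^ p * w s) (Set.Ioc 0 a) :=
      hGint.mono_set (Set.Ioc_subset_Ioc_right har)
    have h2 : IntegrableOn (fun s : ℝ => s ^ p * w s) (Set.Ioc a r) :=
      hGint.mono_set (Set.Ioc_subset_Ioc ha.le le_rfl)
    rw [intervalIntegral.integral_of_le har]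
    have hu : Set.Ioc (0:ℝ) a ∪ Set.Ioc a r = Set.Ioc 0 r := Set.Ioc_union_Ioc_eq_Ioc ha.le har
    have := setIntegral_union (Set.Ioc_disjoint_Ioc_of_le le_rfl) measurableSet_Ioc h1 h2
      (f := fun s : ℝ => s ^ p * w s) (μ := volume)
    rw [hu] at this
    rw [this]; ring
  have key : ∀ᶠ a in nhdsWithin 0 (Set.Ioi 0), g r - g a
      = (∫ s in Set.Ioc (0:ℝ) r, s ^ p * w s) - (∫ s in Set.Ioc (0:ℝ) a, s ^ p * w s) := by
    filter_upwards [Ioo_mem_nhdsGT hr] with a ha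
    have ha0 : 0 < a := ha.1
    have har : a ≤ r := ha.2.le
    have hIccpos : Set.Icc a r ⊆ Set.Ioi (0:ℝ) := fun x hx => lt_of_lt_of_le ha0 hx.1
    have hgFTC : (∫ s in a..r, s ^ p * F s) = g r - g a := by
      apply intervalIntegral.integral_eq_sub_of_hasDerivAt
      · intro x hx
        rw [Set.uIcc_of_le har] at hx
        exact hg' x (hIccpos hx)
      · exact (((hrpow_cont p).mono hIccpos).mul (hFcont.mono hIccpos)).intervalIntegrable_of_Icc har
    have hcongr : (∫ s in a..r, s ^ p * F s) = ∫ s in a..r, s ^ p * w s := by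
      apply intervalIntegral.integral_congr
      intro s hs
      rw [Set.uIcc_of_le har] at hs
      dsimp only
      rw [hFw s (hIccpos hs) hs.2]
    rw [← hgFTC, hcongr, hGadd a ha0 har]
  have t1 : Filter.Tendsto (fun a : ℝ => g r - g a) (nhdsWithin 0 (Set.Ioi 0))
      (nhds (g r - 1)) := tendsto_const_nhds.sub hzero
  have t2 : Filter.Tendsto (fun a : ℝ => g r - g a) (nhdsWithin 0 (Set.Ioi 0))
      (nhds ((∫ s in Set.Ioc (0:ℝ) r, s ^ p * w s) - 0)) :=
    Filter.Tendsto.congr' (by filter_upwards [key] with a ha; exact ha.symm)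
      (tendsto_const_nhds.sub hGprim)
  have hgr : g r - 1 = ∫ s in Set.Ioc (0:ℝ) r, s ^ p * w s := by
    have := tendsto_nhds_unique t1 t2
    rw [sub_zero] at this
    exact this
  refine ⟨hfint, ?_, ?_⟩
  · simpa only [hw_app] using hGint
  · have hrK : r ^ ((k:ℝ)) * r ^ (-(k:ℝ)) = 1 := by
      rw [← Real.rpow_add hr]; simp
    have hgr2 : g r = 1 + ∫ s in Set.Ioc (0:ℝ) r, s ^ p * w s := by linarith
    calc h r = r ^ (k:ℝ) * (r ^ (-(k:ℝ)) * h r) := by rw [← mul_assoc, hrK, one_mul]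
      _ = r ^ (k:ℝ) * g r := by rw [hg_def]
      _ = r ^ (k:ℝ) * (1 + ∫ s in Set.Ioc (0:ℝ) r, s ^ p * w s) := by rw [hgr2]
      _ = _ := by simp only [hw_app]
end

section
/- Let N ≥ 1 be an integer and a ∈ ℝ with 2a + N > 0. Let h(r) := r^a and define, for continuous f : [0,∞) → ℝ, I[f](r) := ∫₀^r s^{1−N} h(s)^{−2} (∫₀^s τ^{N−1} h(τ)² f(τ) dτ) ds, with iterates I^0[f] := f and I^{n+1}[f] := I[I^n[f]]. Then for every n ≥ 1 and every r > 0, I^n[1](r) = c_n r^{2n}, where c_n := ∏_{j=1}^{n} ( (2j)(2a + N + 2j − 2) )^{−1} and 1 denotes the constant function one. -/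
open MeasureTheory Real

/-- The integral operator `I[f](r) = ∫₀^r s^{1-N} h(s)⁻² (∫₀^s τ^{N-1} h(τ)² f(τ) dτ) ds`
associated with a positive weight `h`. -/
noncomputable def Iop (N : ℕ) (h : ℝ → ℝ) (f : ℝ → ℝ) : ℝ → ℝ :=
  fun r => ∫ s in Set.Ioc (0 : ℝ) r, s ^ (1 - (N : ℝ)) / h s ^ 2 *
    ∫ τ in Set.Ioc (0 : ℝ) s, τ ^ ((N : ℝ) - 1) * h τ ^ 2 * f τ

/-- Iterates of `Iop`: `I^0[f] = f`, `I^{n+1}[f] = I[I^n[f]]`. -/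
noncomputable def Iiter (N : ℕ) (h : ℝ → ℝ) : ℕ → (ℝ → ℝ) → ℝ → ℝ
  | 0, f => f
  | n + 1, f => Iop N h (Iiter N h n f)

lemma Iop_monomial (N : ℕ) (a : ℝ) (k : ℕ) (c : ℝ) (f : ℝ → ℝ)
    (hD : 0 < (N:ℝ) + 2*a + 2*k)
    (hf : ∀ τ : ℝ, 0 < τ → f τ = c * τ ^ (2*k)) :
    ∀ r : ℝ, 0 < r → Iop N (fun s => s ^ a) f r
      = c / ((2*(k:ℝ)+2) * ((N:ℝ) + 2*a + 2*k)) * r ^ (2*k+2) := by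
  intro r hr
  set D : ℝ := (N:ℝ) + 2*a + 2*k with hDdef
  have hk0 : (0:ℝ) ≤ (k:ℝ) := k.cast_nonneg
  have inner : ∀ s : ℝ, 0 < s →
      (∫ τ in Set.Ioc (0:ℝ) s, τ ^ ((N : ℝ) - 1) * (τ ^ a) ^ 2 * f τ)
        = c / D * s ^ D := by
    intro s hs
    have h1 : ∫ τ in Set.Ioc (0:ℝ) s, τ ^ ((N : ℝ) - 1) * (τ ^ a) ^ 2 * f τ
        = ∫ τ in Set.Ioc (0:ℝ) s, c * τ ^ (D - 1) := by
      apply MeasureTheory.setIntegral_congr_fun measurableSet_Ioc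
      intro τ hτ
      have hτ0 : 0 < τ := hτ.1
      dsimp only
      rw [hf τ hτ0]
      calc τ ^ ((N:ℝ)-1) * (τ^a)^2 * (c * τ^(2*k))
          = c * (τ ^ ((N:ℝ)-1) * (τ^a*τ^a) * τ^(((2*k:ℕ)):ℝ)) := by
            rw [sq, Real.rpow_natCast]; ring
        _ = c * τ ^ (((N:ℝ)-1) + (a+a) + ((2*k:ℕ):ℝ)) := by
            rw [← Real.rpow_add hτ0, ← Real.rpow_add hτ0, ← Real.rpow_add hτ0]
        _ = c * τ ^ (D-1) := by
            rw [show ((N:ℝ)-1) + (a+a) + ((2*k:ℕ):ℝ) = D - 1 by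
              rw [hDdef]; push_cast; ring]
    rw [h1, ← intervalIntegral.integral_of_le hs.le, intervalIntegral.integral_const_mul,
        integral_rpow (Or.inl (by linarith)), Real.zero_rpow (by linarith),
        show D - 1 + 1 = D by ring]
    rw [sub_zero, div_mul_eq_mul_div, mul_div_assoc']
  have h2 : Iop N (fun s => s ^ a) f r
      = ∫ s in Set.Ioc (0:ℝ) r, (c / D) * s ^ (2*(k:ℝ) + 1) := by
    apply MeasureTheory.setIntegral_congr_fun measurableSet_Ioc
    intro s hs
    have hs0 : 0 < s := hs.1
    dsimp only
    rw [inner s hs0]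
    calc s ^ (1 - (N:ℝ)) / (s^a)^2 * (c / D * s ^ D)
        = c / D * (s ^ (1-(N:ℝ)) * s ^ (-(a+a)) * s ^ D) := by
          rw [sq, ← Real.rpow_add hs0, div_eq_mul_inv, ← Real.rpow_neg hs0.le]; ring
      _ = c / D * s ^ ((1-(N:ℝ)) + -(a+a) + D) := by
          rw [← Real.rpow_add hs0, ← Real.rpow_add hs0]
      _ = c / D * s ^ (2*(k:ℝ)+1) := by
          rw [show (1-(N:ℝ)) + -(a+a) + D = 2*(k:ℝ)+1 by rw [hDdef]; ring]
  rw [h2, ← intervalIntegral.integral_of_le hr.le, intervalIntegral.integral_const_mul,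
      integral_rpow (Or.inl (by linarith)), Real.zero_rpow (by linarith),
      show 2*(k:ℝ) + 1 + 1 = ((2*k+2 : ℕ) : ℝ) by push_cast; ring,
      Real.rpow_natCast]
  rw [sub_zero, show ((2*k+2:ℕ):ℝ) = 2*(k:ℝ)+2 by push_cast; ring,
      div_mul_div_comm, div_mul_eq_mul_div, mul_comm D]


/-- for the power weight `h(r) = r^a` with `2a + N > 0`, the iterates of the
integral operator applied to the constant function `1` satisfy
`I^n[1](r) = (∏_{j=1}^n ((2j)(2a+N+2j-2))⁻¹) r^{2n}` for all `n ≥ 1` and `r > 0`. -/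
theorem stmt_18 (N : ℕ) (hN : 1 ≤ N) (a : ℝ) (ha : 0 < 2 * a + N) :
    ∀ n : ℕ, 1 ≤ n → ∀ r : ℝ, 0 < r →
      Iiter N (fun s : ℝ => s ^ a) n (fun _ => 1) r
        = (∏ j ∈ Finset.Icc 1 n, ((2 * (j : ℝ)) * (2 * a + N + 2 * (j : ℝ) - 2))⁻¹)
            * r ^ (2 * n) := by
  intro n
  induction n with
  | zero => omega
  | succ m ih =>
    intro _ r hr
    rcases Nat.eq_zero_or_pos m with hm | hm
    · subst hm
      have key := Iop_monomial N a 0 1 (fun _ => 1)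
        (by push_cast; linarith) (by intro τ hτ; simp) r hr
      simp only [Iiter, Iop] at key ⊢
      rw [key, Finset.Icc_self, Finset.prod_singleton]
      norm_num
      ring_nf
      exact Or.inl trivial
    · have hDm : 0 < (N:ℝ) + 2*a + 2*m := by
        have : (0:ℝ) ≤ (m:ℝ) := m.cast_nonneg
        linarith
      have key := Iop_monomial N a m
        (∏ j ∈ Finset.Icc 1 m, ((2 * (j : ℝ)) * (2 * a + N + 2 * (j : ℝ) - 2))⁻¹)
        (Iiter N (fun s : ℝ => s ^ a) m (fun _ => 1)) hDm
        (fun τ hτ => ih hm τ hτ) r hr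
      show Iop N (fun s : ℝ => s ^ a) (Iiter N (fun s : ℝ => s ^ a) m (fun _ => 1)) r = _
      rw [key, Finset.prod_Icc_succ_top (by omega : 1 ≤ m + 1)]
      have h1 : 2*(m+1) = 2*m+2 := by ring
      rw [h1]
      push_cast
      rw [div_eq_mul_inv]
      congr 1
      congr 1
      congr 1
      ring
end
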